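/- arXiv:1802.08464 — 3 statements merged into one kernel-verified Lean document; each statement's English description precedes it below -/
import Mathlib

section
/- Let C : X × X → ℝ be a symmetric three-times continuously differentiable kernel on X ⊆ ℝ^d, let ‖·‖_sep be a norm on ℝ^d, and let s_max ∈ ℕ₊, ε_near > 0, Δ ≥ 2ε_near and positive constants a₁, a₂, v, b₂, λ₁, b₃, c₀, c₁, e₀, e₁, e₂, e₃, h₀, h₁, h₂ be such that: at x = x′: C(x,x) = 1, |∂_{1,i}C(x,x)| ≤ a₁, |∂_{1,i}∂_{2,j}C(x,x)| ≤ a₂ for i ≠ j, and ∂_{1,i}∂_{2,i}C(x,x) ≥ v; for ‖x−x′‖_sep ≤ ε_near: every eigenvalue of ∇₂²C(x,x′) lies in [−b₂, −λ₁] and ‖∇₁∇₂²C(x,x′)‖ ≤ b₃; for ‖x−x′‖_sep ≥ ε_near: |C(x,x′)| ≤ c₀ and ‖∇₁C(x,x′)‖ ≤ c₁; for ‖x−x′‖_sep ≥ Δ/2: |C| ≤ e₀/s_max, ‖∇₁C‖ ≤ e₁/s_max, ‖∇₂²C‖ ≤ e₂/s_max, ‖∇₁∇₂²C‖ ≤ e₃/s_max;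 for ‖x−x′‖_sep ≥ Δ: |C| ≤ h₀/s_max, |∂_{1,i}C| ≤ h₁/s_max, ‖∂_{1,i}∇₂C‖₁ ≤ h₂/s_max. Set u = (a₁ + h₁)/√v and suppose there exist δ, δ′ < 1 with v⁻¹(d·a₂ + h₂) ≤ δ, h₀ + d·u²/(1−δ) ≤ δ′, ε_η := 1 − ((c₀+e₀)/(1−δ′) + u√d·(c₁+e₁)/(√v(1−δ)(1−δ′))) > 0, and λ_η := (1 − δ′/(1−δ′))λ₁ − e₂/(1−δ′) − u√d·(b₃+e₃)/(√v(1−δ)(1−δ′)) > 0. Then for every s ≤ s_max, every a₁,…,a_s ∈ ℝ \ {0} and x₁,…,x_s ∈ X pairwise Δ-separated in ‖·‖_sep, the matrix Υ is invertible and the function η(x) = (Υ⁻¹u_s)ᵀ f(x) satisfies: η(x_i) = sign(a_i) and ∇η(x_i) = 0 for all i; |η(x)| < 1 − ε_η whenever ‖x − x_i‖_sep ≥ ε_near for all i; and −sign(a_i)∇²η(x) ≻ λ_η·Id whenever ‖x − x_i‖_sep ≤ ε_near. -/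
open Real

noncomputable section

abbrev Euc (d : ℕ) := EuclideanSpace ℝ (Fin d)

/-- Index set of size `s(d+1)`. -/
abbrev Idx (s d : ℕ) := Fin s ⊕ (Fin s × Fin d)

def pdv {d : ℕ} (f : Euc d → ℝ) (i : Fin d) (z : Euc d) : ℝ :=
  fderiv ℝ f z (EuclideanSpace.single i 1)

/-- `∂_{1,i} C`. -/
def pd1 {d : ℕ} (C : Euc d → Euc d → ℝ) (i : Fin d) (x y : Euc d) : ℝ :=
  pdv (fun x' => C x' y) i x

/-- `∂_{1,i}∂_{2,j} C`. -/
def pd12 {d : ℕ} (C : Euc d → Euc d → ℝ) (i j : Fin d) (x y : Euc d) : ℝ :=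
  pdv (fun x' => pdv (C x') j y) i x

/-- Hessian matrix of a scalar function. -/
def hess {d : ℕ} (f : Euc d → ℝ) (z : Euc d) : Matrix (Fin d) (Fin d) ℝ :=
  fun i j => pdv (fun w => pdv f j w) i z

/-- Hessian of a kernel in its second variable. -/
def hess2 {d : ℕ} (C : Euc d → Euc d → ℝ) (x y : Euc d) : Matrix (Fin d) (Fin d) ℝ :=
  hess (C x) y

/-- `∂_{1,k} ∇₂² C`. -/
def pd1hess2 {d : ℕ} (C : Euc d → Euc d → ℝ) (k : Fin d) (x y : Euc d) :
    Matrix (Fin d) (Fin d) ℝ :=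
  fun i j => pdv (fun x' => hess2 C x' y i j) k x

/-- Spectral norm of a real matrix. -/
def specNorm {ι : Type*} [Fintype ι] [DecidableEq ι] (A : Matrix ι ι ℝ) : ℝ :=
  ‖LinearMap.toContinuousLinearMap (Matrix.toEuclideanLin A)‖

/-- The vector `f(x) ∈ ℝ^{s(d+1)}` of (normalized) kernel sections and first
derivatives at the points `x₁,…,x_s`. -/
def kerVec {d s : ℕ} (C : Euc d → Euc d → ℝ) (x : Fin s → Euc d)
    (v : Fin s → Fin d → ℝ) (z : Euc d) : Idx s d → ℝ :=
  Sum.elim (fun i => C (x i) z) (fun p => v p.1 p.2 * pd1 C p.2 (x p.1) z)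

/-- The matrix `Υ ∈ ℝ^{s(d+1)×s(d+1)}` of (normalized) kernel values and derivatives
at the points `x₁,…,x_s`. -/
def kerMat {d s : ℕ} (C : Euc d → Euc d → ℝ) (x : Fin s → Euc d)
    (v : Fin s → Fin d → ℝ) : Matrix (Idx s d) (Idx s d) ℝ :=
  fun r c =>
    match r, c with
    | Sum.inl i, Sum.inl j => C (x i) (x j)
    | Sum.inl j, Sum.inr (l, a) => v l a * pd1 C a (x l) (x j)
    | Sum.inr (l, a), Sum.inl j => v l a * pd1 C a (x l) (x j)
    | Sum.inr (l, a), Sum.inr (l', b) => v l a * v l' b * pd12 C a b (x l) (x l')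

/-- The padded sign vector `u_s = (sign(a₁),…,sign(a_s),0,…,0)`. -/
def signVec {d s : ℕ} (a : Fin s → ℝ) : Idx s d → ℝ :=
  Sum.elim (fun i => Real.sign (a i)) (fun _ => 0)

namespace Stmt2Aux

variable {d : ℕ}

abbrev ee (i : Fin d) : Euc d := EuclideanSpace.single i 1

section generic
variable {E F G α : Type*} [NormedAddCommGroup E] [NormedSpace ℝ E]
  [NormedAddCommGroup F] [NormedSpace ℝ F] [NormedAddCommGroup G] [NormedSpace ℝ G]
  [NormedAddCommGroup α] [NormedSpace ℝ α]

lemma fderiv_clm_apply_const {c : E → F →L[ℝ] α} {x : E} (hc : DifferentiableAt ℝ c x)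
    (v : F) (w : E) : fderiv ℝ (fun y => c y v) x w = (fderiv ℝ c x w) v := by
  rw [fderiv_clm_apply hc (differentiableAt_const v)]
  simp

lemma diff_clm_apply_const {c : E → F →L[ℝ] α} {x : E} (hc : DifferentiableAt ℝ c x)
    (v : F) : DifferentiableAt ℝ (fun y => c y v) x :=
  (ContinuousLinearMap.apply ℝ α v).differentiableAt.comp x hc

lemma fderiv_clm_apply_const₂ {M : E → F →L[ℝ] G →L[ℝ] α} {x : E}
    (hM : DifferentiableAt ℝ M x) (v₁ : F) (v₂ : G) (w : E) :
    fderiv ℝ (fun y => M y v₁ v₂) x w = ((fderiv ℝ M x w) v₁) v₂ := by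
  have h1 : DifferentiableAt ℝ (fun y => M y v₁) x := diff_clm_apply_const hM v₁
  rw [fderiv_clm_apply_const h1 v₂ w, fderiv_clm_apply_const hM v₁ w]

end generic

section slices
variable {α : Type*} [NormedAddCommGroup α] [NormedSpace ℝ α]

lemma diff_slice1 {G : Euc d × Euc d → α} {x y : Euc d} (hG : DifferentiableAt ℝ G (x, y)) :
    DifferentiableAt ℝ (fun w => G (w, y)) x :=
  hG.comp x (differentiableAt_id.prodMk (differentiableAt_const y))

lemma diff_slice2 {G : Euc d × Euc d → α} {x y : Euc d} (hG : DifferentiableAt ℝ G (x, y)) :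
    DifferentiableAt ℝ (fun z => G (x, z)) y :=
  hG.comp y ((differentiableAt_const x).prodMk differentiableAt_id)

lemma fderiv_slice1 {G : Euc d × Euc d → α} {x y : Euc d} (hG : DifferentiableAt ℝ G (x, y))
    (u : Euc d) : fderiv ℝ (fun w => G (w, y)) x u = fderiv ℝ G (x, y) (u, 0) := by
  have h : HasFDerivAt (fun w => G (w, y))
      ((fderiv ℝ G (x, y)).comp ((ContinuousLinearMap.id ℝ (Euc d)).prod 0)) x :=
    hG.hasFDerivAt.comp x ((hasFDerivAt_id x).prodMk (hasFDerivAt_const y x))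
  rw [h.fderiv]
  simp

lemma fderiv_slice2 {G : Euc d × Euc d → α} {x y : Euc d} (hG : DifferentiableAt ℝ G (x, y))
    (u : Euc d) : fderiv ℝ (fun z => G (x, z)) y u = fderiv ℝ G (x, y) (0, u) := by
  have h : HasFDerivAt (fun z => G (x, z))
      ((fderiv ℝ G (x, y)).comp ((0 : Euc d →L[ℝ] Euc d).prod (ContinuousLinearMap.id ℝ (Euc d)))) y :=
    hG.hasFDerivAt.comp y ((hasFDerivAt_const x y).prodMk (hasFDerivAt_id y))
  rw [h.fderiv]
  simp

end slices

/-! ### kernel calculus -/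

def FF (C : Euc d → Euc d → ℝ) : Euc d × Euc d → ℝ := fun p => C p.1 p.2
def DF (C : Euc d → Euc d → ℝ) := fderiv ℝ (FF C)
def D2F (C : Euc d → Euc d → ℝ) := fderiv ℝ (DF C)
def D3F (C : Euc d → Euc d → ℝ) := fderiv ℝ (D2F C)

def swapCLM : (Euc d × Euc d) →L[ℝ] (Euc d × Euc d) :=
  (ContinuousLinearMap.snd ℝ (Euc d) (Euc d)).prod (ContinuousLinearMap.fst ℝ (Euc d) (Euc d))

@[simp] lemma swapCLM_apply (p : Euc d × Euc d) : (swapCLM p) = (p.2, p.1) := rfl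

variable {C : Euc d → Euc d → ℝ} (hC : ContDiff ℝ 3 (fun p : Euc d × Euc d => C p.1 p.2))
include hC

lemma diffF : Differentiable ℝ (FF C) := hC.differentiable (by norm_num)
lemma cdDF : ContDiff ℝ 2 (DF C) := hC.fderiv_right (by norm_num)
lemma diffDF : Differentiable ℝ (DF C) := (cdDF hC).differentiable (by norm_num)
lemma cdD2F : ContDiff ℝ 1 (D2F C) := (cdDF hC).fderiv_right (by norm_num)
lemma diffD2F : Differentiable ℝ (D2F C) := (cdD2F hC).differentiable (by norm_num)

lemma pd1_eq {i : Fin d} {x y : Euc d} : pd1 C i x y = DF C (x, y) (ee i, 0) :=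
  fderiv_slice1 (G := FF C) (diffF hC (x, y)) (ee i)

lemma pdvC_eq {j : Fin d} {x y : Euc d} : pdv (C x) j y = DF C (x, y) (0, ee j) :=
  fderiv_slice2 (G := FF C) (diffF hC (x, y)) (ee j)

lemma pd12_eq {i j : Fin d} {x y : Euc d} :
    pd12 C i j x y = D2F C (x, y) (ee i, 0) (0, ee j) := by
  unfold pd12
  have h1 : (fun w => pdv (C w) j y) = fun w => DF C (w, y) (0, ee j) :=
    funext fun w => pdvC_eq hC
  rw [h1]
  unfold pdv
  rw [fderiv_clm_apply_const (diff_slice1 (diffDF hC (x, y))) (0, ee j) (ee i),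
    fderiv_slice1 (diffDF hC (x, y)) (ee i)]
  rfl

lemma hess2_eq {i j : Fin d} {x y : Euc d} :
    hess2 C x y i j = D2F C (x, y) (0, ee i) (0, ee j) := by
  show pdv (fun w => pdv (C x) j w) i y = _
  have h1 : (fun w => pdv (C x) j w) = fun w => DF C (x, w) (0, ee j) :=
    funext fun w => pdvC_eq hC
  rw [h1]
  unfold pdv
  rw [fderiv_clm_apply_const (diff_slice2 (diffDF hC (x, y))) (0, ee j) (ee i),
    fderiv_slice2 (diffDF hC (x, y)) (ee i)]
  rfl

lemma pd1hess2_eq {k i j : Fin d} {x y : Euc d} :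
    pd1hess2 C k x y i j = D3F C (x, y) (ee k, 0) (0, ee i) (0, ee j) := by
  show pdv (fun x' => hess2 C x' y i j) k x = _
  have h1 : (fun x' => hess2 C x' y i j) = fun x' => D2F C (x', y) (0, ee i) (0, ee j) :=
    funext fun x' => hess2_eq hC
  rw [h1]
  unfold pdv
  rw [fderiv_clm_apply_const₂ (diff_slice1 (G := D2F C) (diffD2F hC (x, y))) (0, ee i) (0, ee j) (ee k),
    fderiv_slice1 (G := D2F C) (diffD2F hC (x, y)) (ee k)]
  rfl

lemma pd1sec_eq {a : Fin d} {x : Euc d} :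
    (fun z => pd1 C a x z) = fun z => DF C (x, z) (ee a, 0) :=
  funext fun z => pd1_eq hC

lemma pdv_pd1sec {a j : Fin d} {x w : Euc d} :
    pdv (fun z => pd1 C a x z) j w = D2F C (x, w) (0, ee j) (ee a, 0) := by
  rw [pd1sec_eq hC]
  unfold pdv
  rw [fderiv_clm_apply_const (diff_slice2 (diffDF hC (x, w))) (ee a, 0) (ee j),
    fderiv_slice2 (diffDF hC (x, w)) (ee j)]
  rfl

lemma hess_pd1sec {a i j : Fin d} {x y : Euc d} :
    hess (fun z => pd1 C a x z) y i j = D3F C (x, y) (0, ee i) (0, ee j) (ee a, 0) := by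
  show pdv (fun w => pdv (fun z => pd1 C a x z) j w) i y = _
  have h1 : (fun w => pdv (fun z => pd1 C a x z) j w)
      = fun w => D2F C (x, w) (0, ee j) (ee a, 0) := funext fun w => pdv_pd1sec hC
  rw [h1]
  unfold pdv
  rw [fderiv_clm_apply_const₂ (diff_slice2 (G := D2F C) (diffD2F hC (x, y))) (0, ee j) (ee a, 0) (ee i),
    fderiv_slice2 (G := D2F C) (diffD2F hC (x, y)) (ee i)]
  rfl

/-! symmetry -/

lemma D2F_symm (p : Euc d × Euc d) (u v : Euc d × Euc d) :
    D2F C p u v = D2F C p v u :=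
  second_derivative_symmetric (f := FF C) (f' := DF C) (f'' := D2F C p)
    (fun q => (diffF hC q).hasFDerivAt) (diffDF hC p).hasFDerivAt u v

lemma D3F_symm12 (p : Euc d × Euc d) (u v w : Euc d × Euc d) :
    D3F C p u v w = D3F C p v u w := by
  have h := second_derivative_symmetric (f := DF C) (f' := D2F C) (f'' := D3F C p)
    (fun q => (diffDF hC q).hasFDerivAt) (diffD2F hC p).hasFDerivAt u v
  rw [h]

lemma D3F_symm23 (p : Euc d × Euc d) (u v w : Euc d × Euc d) :
    D3F C p u v w = D3F C p u w v := by
  have h1 : D3F C p u v w = fderiv ℝ (fun q => D2F C q v w) p u :=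
    (fderiv_clm_apply_const₂ (diffD2F hC p) v w u).symm
  have h2 : (fun q => D2F C q v w) = fun q => D2F C q w v :=
    funext fun q => D2F_symm hC q v w
  rw [h1, h2, fderiv_clm_apply_const₂ (diffD2F hC p) w v u]
  rfl

section symmsec
variable (hsym : ∀ x y, C x y = C y x)
include hsym

lemma FF_swap : (fun p => FF C (swapCLM p)) = FF C :=
  funext fun q => hsym q.2 q.1

lemma DF_swap (p u : Euc d × Euc d) : DF C p u = DF C (p.2, p.1) (u.2, u.1) := by
  have h : HasFDerivAt (fun q => FF C (swapCLM q))
      ((DF C (swapCLM p)).comp swapCLM) p :=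
    (diffF hC (swapCLM p)).hasFDerivAt.comp p swapCLM.hasFDerivAt
  rw [FF_swap hC hsym] at h
  have : DF C p = (DF C (swapCLM p)).comp swapCLM := h.fderiv
  rw [this]
  rfl

lemma D2F_swap (p u v : Euc d × Euc d) :
    D2F C p u v = D2F C (p.2, p.1) (u.2, u.1) (v.2, v.1) := by
  have h1 : D2F C p u v = fderiv ℝ (fun q => DF C q v) p u :=
    (fderiv_clm_apply_const (diffDF hC p) v u).symm
  have h2 : (fun q => DF C q v) = fun q => DF C (swapCLM q) (v.2, v.1) :=
    funext fun q => DF_swap hC hsym q v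
  have hg : DifferentiableAt ℝ (fun q' => DF C q' (v.2, v.1)) (swapCLM p) :=
    diff_clm_apply_const (diffDF hC _) _
  have h3 : HasFDerivAt (fun q => DF C (swapCLM q) (v.2, v.1))
      ((fderiv ℝ (fun q' => DF C q' (v.2, v.1)) (swapCLM p)).comp swapCLM) p :=
    hg.hasFDerivAt.comp p swapCLM.hasFDerivAt
  rw [h1, h2, h3.fderiv]
  show fderiv ℝ (fun q' => DF C q' (v.2, v.1)) (swapCLM p) (swapCLM u) = _
  rw [fderiv_clm_apply_const (diffDF hC _) _ _]
  rfl

lemma pdvC_pd1 {j : Fin d} {x y : Euc d} : pdv (C x) j y = pd1 C j y x := by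
  rw [pdvC_eq hC, pd1_eq hC, DF_swap hC hsym]

lemma pd12_symm {i j : Fin d} {x y : Euc d} : pd12 C i j x y = pd12 C j i y x := by
  rw [pd12_eq hC, pd12_eq hC, D2F_symm hC, D2F_swap hC hsym]

lemma pdv_pd1sec_pd12 {a j : Fin d} {x w : Euc d} :
    pdv (fun z => pd1 C a x z) j w = pd12 C j a w x := by
  rw [pdv_pd1sec hC, pd12_eq hC, D2F_swap hC hsym]

end symmsec

lemma hess_pd1sec_eq_pd1hess2 {a i j : Fin d} {x y : Euc d} :
    hess (fun z => pd1 C a x z) y i j = pd1hess2 C a x y i j := by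
  rw [hess_pd1sec hC, pd1hess2_eq hC, D3F_symm23 hC, D3F_symm12 hC]


/-! differentiability of sections -/

lemma diff_Csec {x : Euc d} : Differentiable ℝ (fun z => C x z) :=
  fun y => diff_slice2 (G := FF C) (diffF hC (x, y))

lemma diff_pd1sec {a : Fin d} {x : Euc d} : Differentiable ℝ (fun z => pd1 C a x z) := by
  rw [pd1sec_eq hC]
  exact fun w => diff_clm_apply_const (diff_slice2 (diffDF hC (x, w))) _

lemma diff_pdvCsec {j : Fin d} {x : Euc d} : Differentiable ℝ (fun w => pdv (C x) j w) := by
  have h1 : (fun w => pdv (C x) j w) = fun w => DF C (x, w) (0, ee j) :=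
    funext fun w => pdvC_eq hC
  rw [h1]
  exact fun w => diff_clm_apply_const (diff_slice2 (diffDF hC (x, w))) _

lemma diff_pdvpd1sec {a j : Fin d} {x : Euc d} :
    Differentiable ℝ (fun w => pdv (fun z => pd1 C a x z) j w) := by
  have h1 : (fun w => pdv (fun z => pd1 C a x z) j w)
      = fun w => D2F C (x, w) (0, ee j) (ee a, 0) := funext fun w => pdv_pd1sec hC
  rw [h1]
  intro w
  exact diff_clm_apply_const (diff_clm_apply_const (diff_slice2 (diffD2F hC (x, w))) _) _


/-! ### derivatives of the interpolator -/


omit hC in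
lemma pdv_const_mul {f : Euc d → ℝ} {z : Euc d} (hf : DifferentiableAt ℝ f z) (c : ℝ)
    (j : Fin d) : pdv (fun w => c * f w) j z = c * pdv f j z := by
  unfold pdv
  rw [fderiv_const_mul hf c]
  simp

omit hC in
lemma pdv_sum {ι : Type*} [Fintype ι] (c : ι → ℝ) (g : ι → Euc d → ℝ) {w : Euc d} (j : Fin d)
    (hg : ∀ r, DifferentiableAt ℝ (g r) w) :
    pdv (fun z => ∑ r, c r * g r z) j w = ∑ r, c r * pdv (g r) j w := by
  unfold pdv
  rw [fderiv_fun_sum (u := Finset.univ) (A := fun r z => c r * g r z)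
    (fun r _ => (hg r).const_mul (c r))]
  rw [ContinuousLinearMap.sum_apply]
  exact Finset.sum_congr rfl fun r _ => by
    rw [fderiv_const_mul (hg r) (c r)]; simp

variable {s : ℕ} {x : Fin s → Euc d} {v : Fin s → Fin d → ℝ} {α : Idx s d → ℝ}


lemma eta_pdv (j : Fin d) (w : Euc d) :
    pdv (fun z => ∑ r, α r * kerVec C x v z r) j w
      = ∑ r, α r * (Sum.elim (fun l => pdv (C (x l)) j w)
          (fun p => v p.1 p.2 * pdv (fun z => pd1 C p.2 (x p.1) z) j w) r) := by
  rw [pdv_sum α (fun r z => kerVec C x v z r) j ?_]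
  · refine Finset.sum_congr rfl fun r _ => ?_
    rcases r with l | p
    · rfl
    · show α _ * pdv (fun z => v p.1 p.2 * pd1 C p.2 (x p.1) z) j w = _
      rw [pdv_const_mul (diff_pd1sec hC w) (v p.1 p.2) j]
      rfl
  · intro r
    rcases r with l | p
    · exact diff_Csec hC w
    · exact ((diff_pd1sec hC (a := p.2) (x := x p.1)) w).const_mul _

lemma eta_hess (i j : Fin d) (z : Euc d) :
    hess (fun z => ∑ r, α r * kerVec C x v z r) z i j
      = ∑ r, α r * (Sum.elim (fun l => hess2 C (x l) z i j)
          (fun p => v p.1 p.2 * pd1hess2 C p.2 (x p.1) z i j) r) := by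
  show pdv (fun w => pdv (fun z => ∑ r, α r * kerVec C x v z r) j w) i z = _
  have h1 : (fun w => pdv (fun z => ∑ r, α r * kerVec C x v z r) j w)
      = fun w => ∑ r, α r * (Sum.elim (fun l => pdv (C (x l)) j w)
          (fun p => v p.1 p.2 * pdv (fun z => pd1 C p.2 (x p.1) z) j w) r) :=
    funext fun w => eta_pdv hC j w
  rw [h1, pdv_sum α _ i ?_]
  · refine Finset.sum_congr rfl fun r _ => ?_
    rcases r with l | p
    · rfl
    · show α _ * pdv (fun w => v p.1 p.2 * pdv (fun z => pd1 C p.2 (x p.1) z) j w) i z = _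
      rw [pdv_const_mul (diff_pdvpd1sec hC z) (v p.1 p.2) i]
      show α _ * (v p.1 p.2 * hess (fun z => pd1 C p.2 (x p.1) z) z i j) = _
      rw [hess_pd1sec_eq_pd1hess2 hC]
      rfl
  · intro r
    rcases r with l | p
    · exact diff_pdvCsec hC z
    · exact ((diff_pdvpd1sec hC (a := p.2) (j := j) (x := x p.1)) z).const_mul _



omit hC

lemma sum_mul_abs_le {ι : Type*} (t : Finset ι) (f g : ι → ℝ) (Mf Mg : ℝ)
    (h1 : ∑ i ∈ t, |f i| ≤ Mf) (h2 : ∀ i ∈ t, |g i| ≤ Mg) (hMg : 0 ≤ Mg) :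
    |∑ i ∈ t, f i * g i| ≤ Mf * Mg := by
  calc |∑ i ∈ t, f i * g i| ≤ ∑ i ∈ t, |f i * g i| := Finset.abs_sum_le_sum_abs _ _
    _ = ∑ i ∈ t, |f i| * |g i| := by simp [abs_mul]
    _ ≤ ∑ i ∈ t, |f i| * Mg :=
        Finset.sum_le_sum fun i hi => mul_le_mul_of_nonneg_left (h2 i hi) (abs_nonneg _)
    _ = (∑ i ∈ t, |f i|) * Mg := by rw [Finset.sum_mul]
    _ ≤ Mf * Mg := mul_le_mul_of_nonneg_right h1 hMg

lemma sum_abs_le_sqrt {d : ℕ} (t : Fin d → ℝ) :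
    ∑ a, |t a| ≤ Real.sqrt d * Real.sqrt (∑ a, t a ^ 2) := by
  have h : (∑ a, |t a|) ^ 2 ≤ (d : ℝ) * ∑ a, t a ^ 2 := by
    have := sq_sum_le_card_mul_sum_sq (s := (Finset.univ : Finset (Fin d)))
      (f := fun a => |t a|)
    simpa [sq_abs] using this
  have h0 : 0 ≤ ∑ a, |t a| := Finset.sum_nonneg fun a _ => abs_nonneg _
  calc ∑ a, |t a| = Real.sqrt ((∑ a, |t a|) ^ 2) := (Real.sqrt_sq h0).symm
    _ ≤ Real.sqrt ((d : ℝ) * ∑ a, t a ^ 2) := Real.sqrt_le_sqrt h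
    _ = Real.sqrt d * Real.sqrt (∑ a, t a ^ 2) := Real.sqrt_mul (by positivity) _

lemma euc_norm_le {d : ℕ} (t : Euc d) (M : ℝ) (hM : 0 ≤ M) (h : ∀ a, |t a| ≤ M) :
    ‖t‖ ≤ Real.sqrt d * M := by
  rw [EuclideanSpace.norm_eq]
  have h1 : ∑ a, ‖t a‖ ^ 2 ≤ (d : ℝ) * M ^ 2 := by
    calc ∑ a, ‖t a‖ ^ 2 ≤ ∑ _a : Fin d, M ^ 2 := by
          refine Finset.sum_le_sum fun a _ => ?_
          have := h a
          rw [Real.norm_eq_abs]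
          nlinarith [abs_nonneg (t a)]
      _ = (d : ℝ) * M ^ 2 := by simp [mul_comm]
  calc Real.sqrt (∑ a, ‖t a‖ ^ 2) ≤ Real.sqrt ((d : ℝ) * M ^ 2) := Real.sqrt_le_sqrt h1
    _ = Real.sqrt d * M := by
        rw [Real.sqrt_mul (by positivity), Real.sqrt_sq hM]

lemma qform_abs_le {d : ℕ} (A : Matrix (Fin d) (Fin d) ℝ) (u : Euc d) :
    |dotProduct (⇑u) (A.mulVec ⇑u)| ≤ specNorm A * ‖u‖ ^ 2 := by
  have h1 : dotProduct (⇑u) (A.mulVec ⇑u)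
      = inner (𝕜 := ℝ) u (Matrix.toEuclideanLin A u) := by
    rw [PiLp.inner_apply]
    simp [dotProduct, Matrix.toEuclideanLin_apply, RCLike.inner_apply]
    exact Finset.sum_congr rfl fun _ _ => mul_comm _ _
  rw [h1]
  have h2 : |inner (𝕜 := ℝ) u (Matrix.toEuclideanLin A u)|
      ≤ ‖u‖ * ‖Matrix.toEuclideanLin A u‖ := abs_real_inner_le_norm _ _
  have h3 : ‖Matrix.toEuclideanLin A u‖ ≤ specNorm A * ‖u‖ :=
    (LinearMap.toContinuousLinearMap (Matrix.toEuclideanLin A)).le_opNorm u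
  calc |inner (𝕜 := ℝ) u (Matrix.toEuclideanLin A u)| ≤ ‖u‖ * ‖Matrix.toEuclideanLin A u‖ := h2
    _ ≤ ‖u‖ * (specNorm A * ‖u‖) := by
        exact mul_le_mul_of_nonneg_left h3 (norm_nonneg u)
    _ = specNorm A * ‖u‖ ^ 2 := by ring

lemma qform_sum {d : ℕ} {ι : Type*} (t : Finset ι) (f : ι → Matrix (Fin d) (Fin d) ℝ)
    (u : Fin d → ℝ) :
    dotProduct u ((∑ i ∈ t, f i).mulVec u)
      = ∑ i ∈ t, dotProduct u ((f i).mulVec u) := by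
  classical
  induction t using Finset.cons_induction with
  | empty => simp
  | cons a t ha ih => simp [Finset.sum_insert ha, Matrix.add_mulVec, dotProduct_add, ih]

lemma qform_smul {d : ℕ} (c : ℝ) (A : Matrix (Fin d) (Fin d) ℝ) (u : Fin d → ℝ) :
    dotProduct u ((c • A).mulVec u) = c * dotProduct u (A.mulVec u) := by
  rw [Matrix.smul_mulVec, dotProduct_smul, smul_eq_mul]

/-- Abstract diagonal-dominance estimate for the `2×2`-block linear system. -/
lemma rowBound {s d : ℕ} (M : Matrix (Idx s d) (Idx s d) ℝ)
    (h0' du' u' δ δ' Bb : ℝ)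
    (h0'0 : 0 ≤ h0') (du'0 : 0 ≤ du') (u'0 : 0 ≤ u')
    (δ0 : 0 ≤ δ) (δ1 : δ < 1) (δ'1 : δ' < 1)
    (hδ'2 : h0' + du' * u' / (1 - δ) ≤ δ')
    (hd1 : ∀ i, M (Sum.inl i) (Sum.inl i) = 1)
    (hr0 : ∀ i, ∑ j ∈ Finset.univ.erase i, |M (Sum.inl i) (Sum.inl j)| ≤ h0')
    (hr1 : ∀ i, ∑ p : Fin s × Fin d, |M (Sum.inl i) (Sum.inr p)| ≤ du')
    (hd2 : ∀ p, M (Sum.inr p) (Sum.inr p) = 1)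
    (hr1' : ∀ p : Fin s × Fin d, ∑ j, |M (Sum.inr p) (Sum.inl j)| ≤ u')
    (hr2 : ∀ p : Fin s × Fin d,
      ∑ q ∈ Finset.univ.erase p, |M (Sum.inr p) (Sum.inr q)| ≤ δ)
    (w b : Idx s d → ℝ) (hMw : M.mulVec w = b)
    (hb0 : ∀ p, b (Sum.inr p) = 0) (hbB : ∀ i, |b (Sum.inl i)| ≤ Bb) (hBb : 0 ≤ Bb) :
    (∀ i, |w (Sum.inl i)| ≤ Bb / (1 - δ'))
    ∧ (∀ p, |w (Sum.inr p)| ≤ u' * Bb / ((1 - δ) * (1 - δ')))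
    ∧ (∀ i, |w (Sum.inl i) - b (Sum.inl i)| ≤ δ' * (Bb / (1 - δ'))) := by
  classical
  have h1δ : 0 < 1 - δ := by linarith
  have h1δ' : 0 < 1 - δ' := by linarith
  have δ'0 : 0 ≤ δ' := le_trans (by positivity) hδ'2
  by_cases hs : s = 0
  · subst hs
    exact ⟨fun i => i.elim0, fun p => p.1.elim0, fun i => i.elim0⟩
  have hsn : (Finset.univ : Finset (Fin s)).Nonempty :=
    ⟨⟨0, Nat.pos_of_ne_zero hs⟩, Finset.mem_univ _⟩
  have hrow : ∀ r₀ : Idx s d,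
      (∑ j, M r₀ (Sum.inl j) * w (Sum.inl j))
        + ∑ p : Fin s × Fin d, M r₀ (Sum.inr p) * w (Sum.inr p) = b r₀ := by
    intro r₀
    have h := congrFun hMw r₀
    rw [← h]
    simp [Matrix.mulVec, dotProduct, Fintype.sum_sum_type]
  obtain ⟨i₀, -, hi₀⟩ := Finset.exists_max_image Finset.univ
    (fun i => |w (Sum.inl i)|) hsn
  set B := |w (Sum.inl i₀)| with hBdef
  have hBnn : 0 ≤ B := abs_nonneg _
  have hβle : ∀ i, |w (Sum.inl i)| ≤ B := fun i => hi₀ i (Finset.mem_univ i)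
  -- bound on the derivative block
  have hγB : ∀ p : Fin s × Fin d, |w (Sum.inr p)| ≤ u' * B / (1 - δ) := by
    intro p
    obtain ⟨q₀, -, hq₀⟩ := Finset.exists_max_image Finset.univ
      (fun q : Fin s × Fin d => |w (Sum.inr q)|) ⟨p, Finset.mem_univ p⟩
    have hG : ∀ q, |w (Sum.inr q)| ≤ |w (Sum.inr q₀)| := fun q => hq₀ q (Finset.mem_univ q)
    have h := hrow (Sum.inr q₀)
    rw [hb0 q₀] at h
    have hsplit : ∑ q : Fin s × Fin d, M (Sum.inr q₀) (Sum.inr q) * w (Sum.inr q)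
        = w (Sum.inr q₀)
          + ∑ q ∈ Finset.univ.erase q₀, M (Sum.inr q₀) (Sum.inr q) * w (Sum.inr q) := by
      rw [← Finset.add_sum_erase _ _ (Finset.mem_univ q₀), hd2 q₀, one_mul]
    have e1 : |∑ j, M (Sum.inr q₀) (Sum.inl j) * w (Sum.inl j)| ≤ u' * B :=
      sum_mul_abs_le _ _ _ _ _ (hr1' q₀) (fun j _ => hβle j) hBnn
    have e2 : |∑ q ∈ Finset.univ.erase q₀, M (Sum.inr q₀) (Sum.inr q) * w (Sum.inr q)|
        ≤ δ * |w (Sum.inr q₀)| :=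
      sum_mul_abs_le _ _ _ _ _ (hr2 q₀) (fun q _ => hG q) (abs_nonneg _)
    have hkey : |w (Sum.inr q₀)| ≤ u' * B + δ * |w (Sum.inr q₀)| := by
      have hval : w (Sum.inr q₀)
          = -(∑ j, M (Sum.inr q₀) (Sum.inl j) * w (Sum.inl j))
            - ∑ q ∈ Finset.univ.erase q₀, M (Sum.inr q₀) (Sum.inr q) * w (Sum.inr q) := by
        rw [hsplit] at h
        linarith
      calc |w (Sum.inr q₀)|
          = |(-(∑ j, M (Sum.inr q₀) (Sum.inl j) * w (Sum.inl j)))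
            + (-(∑ q ∈ Finset.univ.erase q₀, M (Sum.inr q₀) (Sum.inr q) * w (Sum.inr q)))| := by
            rw [hval]; ring_nf
        _ ≤ |∑ j, M (Sum.inr q₀) (Sum.inl j) * w (Sum.inl j)|
            + |∑ q ∈ Finset.univ.erase q₀, M (Sum.inr q₀) (Sum.inr q) * w (Sum.inr q)| := by
            calc _ ≤ _ := abs_add_le _ _
            _ = _ := by rw [abs_neg, abs_neg]
        _ ≤ u' * B + δ * |w (Sum.inr q₀)| := add_le_add e1 e2
    have hq₀le : |w (Sum.inr q₀)| ≤ u' * B / (1 - δ) := by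
      rw [le_div_iff₀ h1δ]
      linarith
    exact (hG p).trans hq₀le
  have hγnn : 0 ≤ u' * B / (1 - δ) := by positivity
  -- bound on B
  have hBB : B ≤ Bb / (1 - δ') := by
    have h := hrow (Sum.inl i₀)
    have hsplit : ∑ j, M (Sum.inl i₀) (Sum.inl j) * w (Sum.inl j)
        = w (Sum.inl i₀)
          + ∑ j ∈ Finset.univ.erase i₀, M (Sum.inl i₀) (Sum.inl j) * w (Sum.inl j) := by
      rw [← Finset.add_sum_erase _ _ (Finset.mem_univ i₀), hd1 i₀, one_mul]
    have e1 : |∑ j ∈ Finset.univ.erase i₀, M (Sum.inl i₀) (Sum.inl j) * w (Sum.inl j)|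
        ≤ h0' * B :=
      sum_mul_abs_le _ _ _ _ _ (hr0 i₀) (fun j _ => hβle j) hBnn
    have e2 : |∑ p : Fin s × Fin d, M (Sum.inl i₀) (Sum.inr p) * w (Sum.inr p)|
        ≤ du' * (u' * B / (1 - δ)) :=
      sum_mul_abs_le _ _ _ _ _ (hr1 i₀) (fun p _ => hγB p) hγnn
    have hval : w (Sum.inl i₀)
        = b (Sum.inl i₀)
          - (∑ j ∈ Finset.univ.erase i₀, M (Sum.inl i₀) (Sum.inl j) * w (Sum.inl j))
          - ∑ p : Fin s × Fin d, M (Sum.inl i₀) (Sum.inr p) * w (Sum.inr p) := by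
      rw [hsplit] at h
      linarith
    have hkey : B ≤ Bb + h0' * B + du' * (u' * B / (1 - δ)) := by
      have : |w (Sum.inl i₀)| ≤ |b (Sum.inl i₀)|
          + |∑ j ∈ Finset.univ.erase i₀, M (Sum.inl i₀) (Sum.inl j) * w (Sum.inl j)|
          + |∑ p : Fin s × Fin d, M (Sum.inl i₀) (Sum.inr p) * w (Sum.inr p)| := by
        rw [hval]
        exact (abs_sub _ _).trans (add_le_add ((abs_sub _ _)) le_rfl)
      calc B ≤ _ := this
        _ ≤ Bb + h0' * B + du' * (u' * B / (1 - δ)) :=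
          add_le_add (add_le_add (hbB i₀) e1) e2
    have hexp : du' * (u' * B / (1 - δ)) = (du' * u' / (1 - δ)) * B := by ring
    rw [le_div_iff₀ h1δ']
    rw [hexp] at hkey
    nlinarith [mul_le_mul_of_nonneg_right hδ'2 hBnn]
  refine ⟨fun i => (hβle i).trans hBB, fun p => ?_, fun i => ?_⟩
  · calc |w (Sum.inr p)| ≤ u' * B / (1 - δ) := hγB p
      _ ≤ u' * (Bb / (1 - δ')) / (1 - δ) := by
          have hnum : u' * B ≤ u' * (Bb / (1 - δ')) := mul_le_mul_of_nonneg_left hBB u'0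
          exact (div_le_div_iff_of_pos_right h1δ).mpr hnum
      _ = u' * Bb / ((1 - δ) * (1 - δ')) := by rw [mul_div_assoc', div_div, mul_comm (1 - δ') (1 - δ)]
  · -- third bound
    have h := hrow (Sum.inl i)
    have hsplit : ∑ j, M (Sum.inl i) (Sum.inl j) * w (Sum.inl j)
        = w (Sum.inl i)
          + ∑ j ∈ Finset.univ.erase i, M (Sum.inl i) (Sum.inl j) * w (Sum.inl j) := by
      rw [← Finset.add_sum_erase _ _ (Finset.mem_univ i), hd1 i, one_mul]
    have e1 : |∑ j ∈ Finset.univ.erase i, M (Sum.inl i) (Sum.inl j) * w (Sum.inl j)|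
        ≤ h0' * B :=
      sum_mul_abs_le _ _ _ _ _ (hr0 i) (fun j _ => hβle j) hBnn
    have e2 : |∑ p : Fin s × Fin d, M (Sum.inl i) (Sum.inr p) * w (Sum.inr p)|
        ≤ du' * (u' * B / (1 - δ)) :=
      sum_mul_abs_le _ _ _ _ _ (hr1 i) (fun p _ => hγB p) hγnn
    have hval : w (Sum.inl i) - b (Sum.inl i)
        = -(∑ j ∈ Finset.univ.erase i, M (Sum.inl i) (Sum.inl j) * w (Sum.inl j))
          - ∑ p : Fin s × Fin d, M (Sum.inl i) (Sum.inr p) * w (Sum.inr p) := by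
      rw [hsplit] at h
      linarith
    have habs : |w (Sum.inl i) - b (Sum.inl i)| ≤ h0' * B + du' * (u' * B / (1 - δ)) := by
      rw [hval]
      calc _ ≤ |∑ j ∈ Finset.univ.erase i, M (Sum.inl i) (Sum.inl j) * w (Sum.inl j)|
            + |∑ p : Fin s × Fin d, M (Sum.inl i) (Sum.inr p) * w (Sum.inr p)| := by
            exact (abs_sub _ _).trans (by rw [abs_neg])
        _ ≤ _ := add_le_add e1 e2
    have hexp : h0' * B + du' * (u' * B / (1 - δ)) = (h0' + du' * u' / (1 - δ)) * B := by
      ring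
    calc |w (Sum.inl i) - b (Sum.inl i)| ≤ (h0' + du' * u' / (1 - δ)) * B := by
          rw [← hexp]; exact habs
      _ ≤ δ' * B := mul_le_mul_of_nonneg_right hδ'2 hBnn
      _ ≤ δ' * (Bb / (1 - δ')) := mul_le_mul_of_nonneg_left hBB δ'0


lemma sum_le_smax_mul {ι : Type*} (t : Finset ι) (f : ι → ℝ) (c : ℝ) (hc : 0 ≤ c)
    (smax : ℕ) (hsm : 0 < smax) (hcard : t.card ≤ smax)
    (hb : ∀ i ∈ t, f i ≤ c / smax) : ∑ i ∈ t, f i ≤ c := by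
  have hsmR : (0:ℝ) < smax := by exact_mod_cast hsm
  calc ∑ i ∈ t, f i ≤ t.card • (c / smax) := Finset.sum_le_card_nsmul _ _ _ hb
    _ = (t.card : ℝ) * (c / smax) := nsmul_eq_mul _ _
    _ ≤ (smax : ℝ) * (c / smax) := by
        have : (t.card : ℝ) ≤ (smax : ℝ) := by exact_mod_cast hcard
        exact mul_le_mul_of_nonneg_right this (by positivity)
    _ = c := by field_simp

end Stmt2Aux

open Stmt2Aux in
set_option maxHeartbeats 4000000 in
/-- acceptable kernels interpolate: a kernel satisfying the
quantitative bounds of Table 1 and conditions (1)–(4) admits, for any `Δ`-separated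
family of at most `s_max` signed points, a nondegenerate interpolating function
`η = (Υ⁻¹u_s)ᵀ f(·)`. -/
theorem stmt2 (d : ℕ) (X : Set (Euc d))
    (C : Euc d → Euc d → ℝ)
    (hCsmooth : ContDiff ℝ 3 (fun p : Euc d × Euc d => C p.1 p.2))
    (hCsymm : ∀ x y : Euc d, C x y = C y x)
    -- the separation norm
    (nsep : Seminorm ℝ (Euc d)) (hnsep : ∀ z : Euc d, nsep z = 0 → z = 0)
    (smax : ℕ) (hsmax : 0 < smax)
    (εnear Δ : ℝ) (hεnear : 0 < εnear) (hΔ : 2 * εnear ≤ Δ)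
    -- the table constants, all positive
    (a1 a2 vc b2 lam1 b3 c0 c1 e0 e1 e2 e3 h0 h1 h2 : ℝ)
    (hpos : 0 < a1 ∧ 0 < a2 ∧ 0 < vc ∧ 0 < b2 ∧ 0 < lam1 ∧ 0 < b3 ∧ 0 < c0 ∧ 0 < c1 ∧
      0 < e0 ∧ 0 < e1 ∧ 0 < e2 ∧ 0 < e3 ∧ 0 < h0 ∧ 0 < h1 ∧ 0 < h2)
    -- Table 1, row `x = x′`
    (hdiag0 : ∀ x ∈ X, C x x = 1)
    (hdiag1 : ∀ x ∈ X, ∀ i, |pd1 C i x x| ≤ a1)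
    (hdiag2 : ∀ x ∈ X, ∀ i j, i ≠ j → |pd12 C i j x x| ≤ a2)
    (hdiag2' : ∀ x ∈ X, ∀ i, vc ≤ pd12 C i i x x)
    -- Table 1, row `‖x−x′‖_sep ≤ ε_near`
    (hnear2 : ∀ x ∈ X, ∀ y ∈ X, nsep (x - y) ≤ εnear → ∀ u : Euc d,
      (-b2) * ‖u‖ ^ 2 ≤ dotProduct (⇑u) ((hess2 C x y).mulVec ⇑u) ∧
      dotProduct (⇑u) ((hess2 C x y).mulVec ⇑u) ≤ (-lam1) * ‖u‖ ^ 2)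
    (hnear3 : ∀ x ∈ X, ∀ y ∈ X, nsep (x - y) ≤ εnear → ∀ u : Euc d,
      specNorm (∑ k, u k • pd1hess2 C k x y) ≤ b3 * ‖u‖)
    -- Table 1, row `‖x−x′‖_sep ≥ ε_near`
    (hfar0 : ∀ x ∈ X, ∀ y ∈ X, εnear ≤ nsep (x - y) → |C x y| ≤ c0)
    (hfar1 : ∀ x ∈ X, ∀ y ∈ X, εnear ≤ nsep (x - y) →
      Real.sqrt (∑ i, (pd1 C i x y) ^ 2) ≤ c1)
    -- Table 1, row `‖x−x′‖_sep ≥ Δ/2`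
    (hhalf0 : ∀ x ∈ X, ∀ y ∈ X, Δ / 2 ≤ nsep (x - y) → |C x y| ≤ e0 / smax)
    (hhalf1 : ∀ x ∈ X, ∀ y ∈ X, Δ / 2 ≤ nsep (x - y) →
      Real.sqrt (∑ i, (pd1 C i x y) ^ 2) ≤ e1 / smax)
    (hhalf2 : ∀ x ∈ X, ∀ y ∈ X, Δ / 2 ≤ nsep (x - y) →
      specNorm (hess2 C x y) ≤ e2 / smax)
    (hhalf3 : ∀ x ∈ X, ∀ y ∈ X, Δ / 2 ≤ nsep (x - y) → ∀ u : Euc d,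
      specNorm (∑ k, u k • pd1hess2 C k x y) ≤ (e3 / smax) * ‖u‖)
    -- Table 1, row `‖x−x′‖_sep ≥ Δ`
    (hfull0 : ∀ x ∈ X, ∀ y ∈ X, Δ ≤ nsep (x - y) → |C x y| ≤ h0 / smax)
    (hfull1 : ∀ x ∈ X, ∀ y ∈ X, Δ ≤ nsep (x - y) → ∀ i, |pd1 C i x y| ≤ h1 / smax)
    (hfull2 : ∀ x ∈ X, ∀ y ∈ X, Δ ≤ nsep (x - y) → ∀ i,
      ∑ j, |pd12 C i j x y| ≤ h2 / smax)
    -- conditions (1)–(4), with `u = (a₁ + h₁)/√v`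
    (δ δ' : ℝ) (hδ : δ < 1) (hδ' : δ' < 1)
    (hcond1 : vc⁻¹ * (d * a2 + h2) ≤ δ)
    (hcond1' : h0 + d * ((a1 + h1) / Real.sqrt vc) ^ 2 / (1 - δ) ≤ δ')
    (εη lamEta : ℝ)
    (hεη : εη = 1 - ((c0 + e0) / (1 - δ')
      + ((a1 + h1) / Real.sqrt vc) * Real.sqrt d * (c1 + e1)
          / (Real.sqrt vc * (1 - δ) * (1 - δ'))))
    (hεηpos : 0 < εη)
    (hlamEta : lamEta = (1 - δ' / (1 - δ')) * lam1 - e2 / (1 - δ')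
      - ((a1 + h1) / Real.sqrt vc) * Real.sqrt d * (b3 + e3)
          / (Real.sqrt vc * (1 - δ) * (1 - δ')))
    (hlamEtapos : 0 < lamEta) :
    ∀ s : ℕ, s ≤ smax → ∀ a : Fin s → ℝ, (∀ i, a i ≠ 0) →
    ∀ x : Fin s → Euc d, (∀ i, x i ∈ X) →
    (∀ i j, i ≠ j → Δ ≤ nsep (x i - x j)) →
    ∀ v : Fin s → Fin d → ℝ,
      (∀ l j, v l j = (Real.sqrt (pd12 C j j (x l) (x l)))⁻¹) →
    ∀ η : Euc d → ℝ,
      (η = fun z => ∑ l, ((kerMat C x v)⁻¹.mulVec (signVec a)) l * kerVec C x v z l) →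
    IsUnit (kerMat C x v).det ∧
    (∀ i, η (x i) = Real.sign (a i)) ∧
    (∀ i j, pdv η j (x i) = 0) ∧
    (∀ z ∈ X, (∀ i, εnear ≤ nsep (z - x i)) → |η z| < 1 - εη) ∧
    (∀ i, ∀ z ∈ X, nsep (z - x i) ≤ εnear → ∀ u : Euc d, u ≠ 0 →
      lamEta * ‖u‖ ^ 2 <
        (-Real.sign (a i)) * dotProduct (⇑u) ((hess η z).mulVec ⇑u)) := by
  intro s hss a ha x hxX hsepx v hv η hη
  obtain ⟨ha1, ha2, hvc, hb2, hlam1, hb3, hc0, hc1, he0, he1, he2, he3, hh0, hh1, hh2⟩ := hpos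
  have hsvc : 0 < Real.sqrt vc := Real.sqrt_pos.mpr hvc
  have hucpos : 0 < (a1 + h1) / Real.sqrt vc := by positivity
  set uc : ℝ := (a1 + h1) / Real.sqrt vc with hucdef
  have hδ0 : 0 < δ := by
    have h1 : 0 < vc⁻¹ * ((d:ℝ) * a2 + h2) := by positivity
    exact lt_of_lt_of_le h1 hcond1
  have h1δ : 0 < 1 - δ := by linarith
  have hδ'0 : 0 < δ' := by
    have h1 : 0 ≤ (d:ℝ) * uc ^ 2 / (1 - δ) := by positivity
    linarith [hcond1']
  have h1δ' : 0 < 1 - δ' := by linarith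
  have hsmaxR : (0:ℝ) < (smax:ℝ) := by exact_mod_cast hsmax
  have hsleR : (s:ℝ) ≤ (smax:ℝ) := by exact_mod_cast hss
  -- facts about the normalizers v
  have hpdd : ∀ l j, 0 < pd12 C j j (x l) (x l) :=
    fun l j => lt_of_lt_of_le hvc (hdiag2' (x l) (hxX l) j)
  have hvpos : ∀ l j, 0 < v l j := by
    intro l j
    rw [hv l j]
    have := hpdd l j
    positivity
  have hvle : ∀ l j, v l j ≤ (Real.sqrt vc)⁻¹ := by
    intro l j
    rw [hv l j]
    exact inv_anti₀ hsvc (Real.sqrt_le_sqrt (hdiag2' (x l) (hxX l) j))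
  have hvsq : ∀ l j, v l j * v l j * pd12 C j j (x l) (x l) = 1 := by
    intro l j
    rw [hv l j, ← mul_inv, Real.mul_self_sqrt (le_of_lt (hpdd l j))]
    exact inv_mul_cancel₀ (ne_of_gt (hpdd l j))
  have hnsymm : ∀ w1 w2 : Euc d, nsep (w1 - w2) = nsep (w2 - w1) := by
    intro w1 w2
    rw [← map_neg_eq_map nsep, neg_sub]
  have hvmul : ∀ (l : Fin s) (b : Fin d) (t K : ℝ), |t| ≤ K →
      |v l b * t| ≤ (Real.sqrt vc)⁻¹ * K := by
    intro l b t K hK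
    rw [abs_mul, abs_of_pos (hvpos l b)]
    exact mul_le_mul (hvle l b) hK (abs_nonneg t) (by positivity)
  have hvv : ∀ (l : Fin s) (b : Fin d) (l' : Fin s) (b' : Fin d) (t K : ℝ), |t| ≤ K →
      |v l b * v l' b' * t| ≤ vc⁻¹ * K := by
    intro l b l' b' t K hK
    rw [abs_mul, abs_of_pos (mul_pos (hvpos l b) (hvpos l' b'))]
    have h1 : v l b * v l' b' ≤ (Real.sqrt vc)⁻¹ * (Real.sqrt vc)⁻¹ :=
      mul_le_mul (hvle l b) (hvle l' b') (le_of_lt (hvpos l' b')) (by positivity)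
    have h2 : (Real.sqrt vc)⁻¹ * (Real.sqrt vc)⁻¹ = vc⁻¹ := by
      rw [← mul_inv, Real.mul_self_sqrt (le_of_lt hvc)]
    calc v l b * v l' b' * |t| ≤ (Real.sqrt vc)⁻¹ * (Real.sqrt vc)⁻¹ * K :=
          mul_le_mul h1 hK (abs_nonneg t) (by positivity)
      _ = vc⁻¹ * K := by rw [h2]
  set Υ := kerMat C x v with hΥdef
  have hcards : ∀ i : Fin s, ((Finset.univ.erase i).card ≤ smax) := fun i =>
    le_trans (le_trans (Finset.card_le_card (Finset.erase_subset _ _)) (by simp)) hss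
  -- row sums
  have hd1 : ∀ i, Υ (Sum.inl i) (Sum.inl i) = 1 := fun i => hdiag0 (x i) (hxX i)
  have hr0 : ∀ i, ∑ j ∈ Finset.univ.erase i, |Υ (Sum.inl i) (Sum.inl j)| ≤ h0 := by
    intro i
    refine sum_le_smax_mul _ _ _ (le_of_lt hh0) smax hsmax (hcards i) ?_
    intro j hj
    exact hfull0 (x i) (hxX i) (x j) (hxX j) (hsepx i j (Ne.symm (Finset.ne_of_mem_erase hj)))
  have hr1 : ∀ i, ∑ p : Fin s × Fin d, |Υ (Sum.inl i) (Sum.inr p)| ≤ (d:ℝ) * uc := by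
    intro i
    rw [Fintype.sum_prod_type, ← Finset.add_sum_erase _ _ (Finset.mem_univ i)]
    have t1 : ∑ b, |Υ (Sum.inl i) (Sum.inr (i, b))| ≤ (d:ℝ) * ((Real.sqrt vc)⁻¹ * a1) := by
      calc ∑ b, |Υ (Sum.inl i) (Sum.inr (i, b))|
          ≤ (Finset.univ : Finset (Fin d)).card • ((Real.sqrt vc)⁻¹ * a1) :=
            Finset.sum_le_card_nsmul _ _ _ fun b _ =>
              hvmul i b _ a1 (hdiag1 (x i) (hxX i) b)
        _ = (d:ℝ) * ((Real.sqrt vc)⁻¹ * a1) := by simp [nsmul_eq_mul]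
    have t2 : ∑ l ∈ Finset.univ.erase i, (∑ b, |Υ (Sum.inl i) (Sum.inr (l, b))|)
        ≤ (d:ℝ) * ((Real.sqrt vc)⁻¹ * h1) := by
      refine sum_le_smax_mul _ _ _ (by positivity) smax hsmax (hcards i) ?_
      intro l hl
      have hsep1 : Δ ≤ nsep (x l - x i) := hsepx l i (Finset.ne_of_mem_erase hl)
      calc ∑ b, |Υ (Sum.inl i) (Sum.inr (l, b))|
          ≤ (Finset.univ : Finset (Fin d)).card • ((Real.sqrt vc)⁻¹ * (h1 / smax)) :=
            Finset.sum_le_card_nsmul _ _ _ fun b _ =>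
              hvmul l b _ _ (hfull1 (x l) (hxX l) (x i) (hxX i) hsep1 b)
        _ = (d:ℝ) * ((Real.sqrt vc)⁻¹ * (h1 / smax)) := by simp [nsmul_eq_mul]
        _ = (d:ℝ) * ((Real.sqrt vc)⁻¹ * h1) / smax := by ring
    calc ∑ b, |Υ (Sum.inl i) (Sum.inr (i, b))|
        + ∑ l ∈ Finset.univ.erase i, (∑ b, |Υ (Sum.inl i) (Sum.inr (l, b))|)
        ≤ (d:ℝ) * ((Real.sqrt vc)⁻¹ * a1) + (d:ℝ) * ((Real.sqrt vc)⁻¹ * h1) := add_le_add t1 t2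
      _ = (d:ℝ) * uc := by rw [hucdef]; ring
  have hr1' : ∀ p : Fin s × Fin d, ∑ j, |Υ (Sum.inr p) (Sum.inl j)| ≤ uc := by
    rintro ⟨l, b⟩
    rw [← Finset.add_sum_erase _ _ (Finset.mem_univ l)]
    have t1 : |Υ (Sum.inr (l, b)) (Sum.inl l)| ≤ (Real.sqrt vc)⁻¹ * a1 :=
      hvmul l b _ a1 (hdiag1 (x l) (hxX l) b)
    have t2 : ∑ j ∈ Finset.univ.erase l, |Υ (Sum.inr (l, b)) (Sum.inl j)|
        ≤ (Real.sqrt vc)⁻¹ * h1 := by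
      refine sum_le_smax_mul _ _ _ (by positivity) smax hsmax (hcards l) ?_
      intro j hj
      have hsep1 : Δ ≤ nsep (x l - x j) := hsepx l j (Ne.symm (Finset.ne_of_mem_erase hj))
      calc |Υ (Sum.inr (l, b)) (Sum.inl j)|
          ≤ (Real.sqrt vc)⁻¹ * (h1 / smax) :=
            hvmul l b _ _ (hfull1 (x l) (hxX l) (x j) (hxX j) hsep1 b)
        _ = (Real.sqrt vc)⁻¹ * h1 / smax := by ring
    calc |Υ (Sum.inr (l, b)) (Sum.inl l)|
        + ∑ j ∈ Finset.univ.erase l, |Υ (Sum.inr (l, b)) (Sum.inl j)|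
        ≤ (Real.sqrt vc)⁻¹ * a1 + (Real.sqrt vc)⁻¹ * h1 := add_le_add t1 t2
      _ = uc := by rw [hucdef]; ring
  have hd2 : ∀ p : Fin s × Fin d, Υ (Sum.inr p) (Sum.inr p) = 1 := by
    rintro ⟨l, b⟩
    exact hvsq l b
  have hr2 : ∀ p : Fin s × Fin d,
      ∑ q ∈ Finset.univ.erase p, |Υ (Sum.inr p) (Sum.inr q)| ≤ δ := by
    rintro ⟨l, b⟩
    rw [Finset.sum_erase_eq_sub (Finset.mem_univ (l, b))]
    have hdiagv : |Υ (Sum.inr (l, b)) (Sum.inr (l, b))| = 1 := by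
      rw [hd2 (l, b)]; exact abs_one
    have hfullsum : ∑ q : Fin s × Fin d, |Υ (Sum.inr (l, b)) (Sum.inr q)|
        ≤ 1 + vc⁻¹ * ((d:ℝ) * a2 + h2) := by
      rw [Fintype.sum_prod_type, ← Finset.add_sum_erase _ _ (Finset.mem_univ l)]
      have t1 : ∑ b', |Υ (Sum.inr (l, b)) (Sum.inr (l, b'))| ≤ 1 + (d:ℝ) * (vc⁻¹ * a2) := by
        rw [← Finset.add_sum_erase _ _ (Finset.mem_univ b), hdiagv]
        have t1' : ∑ b' ∈ Finset.univ.erase b, |Υ (Sum.inr (l, b)) (Sum.inr (l, b'))|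
            ≤ (d:ℝ) * (vc⁻¹ * a2) := by
          calc ∑ b' ∈ Finset.univ.erase b, |Υ (Sum.inr (l, b)) (Sum.inr (l, b'))|
              ≤ (Finset.univ.erase b).card • (vc⁻¹ * a2) := by
                refine Finset.sum_le_card_nsmul _ _ _ fun b' hb' => ?_
                exact hvv l b l b' _ a2
                  (hdiag2 (x l) (hxX l) b b' (Ne.symm (Finset.ne_of_mem_erase hb')))
            _ = ((Finset.univ.erase b).card : ℝ) * (vc⁻¹ * a2) := nsmul_eq_mul _ _
            _ ≤ (d:ℝ) * (vc⁻¹ * a2) := by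
                have hcd : ((Finset.univ.erase b).card : ℝ) ≤ (d:ℝ) := by
                  have : (Finset.univ.erase b).card ≤ d :=
                    le_trans (Finset.card_le_card (Finset.erase_subset _ _)) (by simp)
                  exact_mod_cast this
                exact mul_le_mul_of_nonneg_right hcd (by positivity)
        linarith
      have t2 : ∑ l' ∈ Finset.univ.erase l, (∑ b', |Υ (Sum.inr (l, b)) (Sum.inr (l', b'))|)
          ≤ vc⁻¹ * h2 := by
        refine sum_le_smax_mul _ _ _ (by positivity) smax hsmax (hcards l) ?_
        intro l' hl'
        have hsep1 : Δ ≤ nsep (x l - x l') := hsepx l l' (Ne.symm (Finset.ne_of_mem_erase hl'))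
        calc ∑ b', |Υ (Sum.inr (l, b)) (Sum.inr (l', b'))|
            ≤ ∑ b', vc⁻¹ * |pd12 C b b' (x l) (x l')| :=
              Finset.sum_le_sum fun b' _ => hvv l b l' b' _ _ le_rfl
          _ = vc⁻¹ * ∑ b', |pd12 C b b' (x l) (x l')| := by rw [Finset.mul_sum]
          _ ≤ vc⁻¹ * (h2 / smax) :=
              mul_le_mul_of_nonneg_left
                (hfull2 (x l) (hxX l) (x l') (hxX l') hsep1 b) (by positivity)
          _ = vc⁻¹ * h2 / smax := by ring
      calc ∑ b', |Υ (Sum.inr (l, b)) (Sum.inr (l, b'))|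
          + ∑ l' ∈ Finset.univ.erase l, (∑ b', |Υ (Sum.inr (l, b)) (Sum.inr (l', b'))|)
          ≤ (1 + (d:ℝ) * (vc⁻¹ * a2)) + vc⁻¹ * h2 := add_le_add t1 t2
        _ = 1 + vc⁻¹ * ((d:ℝ) * a2 + h2) := by ring
    have := hcond1
    rw [hdiagv]
    linarith
  have hδ'2 : h0 + ((d:ℝ) * uc) * uc / (1 - δ) ≤ δ' := by
    have heq : ((d:ℝ) * uc) * uc / (1 - δ) = (d:ℝ) * uc ^ 2 / (1 - δ) := by ring
    rw [heq]
    exact hcond1'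
  have hucnn : 0 ≤ uc := le_of_lt hucpos
  have hducnn : (0:ℝ) ≤ (d:ℝ) * uc := by positivity
  -- invertibility
  have hdetunit : IsUnit Υ.det := by
    rw [isUnit_iff_ne_zero]
    intro hdet0
    obtain ⟨w, hw0, hww⟩ := Matrix.exists_mulVec_eq_zero_iff.mpr hdet0
    obtain ⟨hβ, hγ, -⟩ := rowBound Υ h0 ((d:ℝ) * uc) uc δ δ' 0
      (le_of_lt hh0) hducnn hucnn (le_of_lt hδ0) (by linarith) hδ'
      hδ'2 hd1 hr0 hr1 hd2 hr1' hr2 w 0 hww (fun p => rfl) (fun i => by simp) le_rfl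
    refine hw0 (funext fun r => ?_)
    rcases r with i | p
    · have := hβ i
      rw [zero_div] at this
      have h2 := abs_nonneg (w (Sum.inl i))
      have : |w (Sum.inl i)| = 0 := le_antisymm this h2
      simpa [abs_eq_zero] using this
    · have := hγ p
      rw [mul_zero, zero_div] at this
      have h2 := abs_nonneg (w (Sum.inr p))
      have : |w (Sum.inr p)| = 0 := le_antisymm this h2
      simpa [abs_eq_zero] using this
  -- the coefficient vector
  set α := Υ⁻¹.mulVec (signVec a) with hαdef
  have hαkey : Υ.mulVec α = signVec a := by
    rw [hαdef, Matrix.mulVec_mulVec, Matrix.mul_nonsing_inv _ hdetunit, Matrix.one_mulVec]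
  have hsgn : ∀ i, |Real.sign (a i)| = 1 := by
    intro i
    rcases lt_trichotomy (a i) 0 with h1 | h1 | h1
    · rw [Real.sign_of_neg h1]; norm_num
    · exact absurd h1 (ha i)
    · rw [Real.sign_of_pos h1]; norm_num
  obtain ⟨hβb, hγb, hβs⟩ := rowBound Υ h0 ((d:ℝ) * uc) uc δ δ' 1
    (le_of_lt hh0) hducnn hucnn (le_of_lt hδ0) (by linarith) hδ'
    hδ'2 hd1 hr0 hr1 hd2 hr1' hr2 α (signVec a) hαkey (fun p => rfl)
    (fun i => le_of_eq (hsgn i)) zero_le_one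
  -- symmetry of the kernel matrix
  have hΥsymm : ∀ r c, Υ r c = Υ c r := by
    rintro (i | ⟨l, b⟩) (j | ⟨l', b'⟩)
    · exact hCsymm (x i) (x j)
    · rfl
    · rfl
    · show v l b * v l' b' * pd12 C b b' (x l) (x l')
        = v l' b' * v l b * pd12 C b' b (x l') (x l)
      rw [pd12_symm hCsmooth hCsymm]
      ring
  -- conclusion 2 : values
  have hval : ∀ i, η (x i) = Real.sign (a i) := by
    intro i
    rw [hη]
    have h1 : ∑ r, α r * kerVec C x v (x i) r = ∑ r, Υ (Sum.inl i) r * α r := by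
      refine Finset.sum_congr rfl fun r _ => ?_
      have h2 : kerVec C x v (x i) r = Υ r (Sum.inl i) := by
        rcases r with j | ⟨l, b⟩ <;> rfl
      rw [h2, hΥsymm r (Sum.inl i), mul_comm]
    show ∑ r, α r * kerVec C x v (x i) r = Real.sign (a i)
    rw [h1]
    have h3 : (Υ.mulVec α) (Sum.inl i) = Real.sign (a i) := by rw [hαkey]; rfl
    exact h3
  -- conclusion 3 : critical points
  have hgrad : ∀ i j, pdv η j (x i) = 0 := by
    intro i j
    rw [hη]
    rw [eta_pdv hCsmooth]
    have h1 : ∑ r, α r * (Sum.elim (fun l => pdv (C (x l)) j (x i))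
        (fun p => v p.1 p.2 * pdv (fun z => pd1 C p.2 (x p.1) z) j (x i)) r)
        = (v i j)⁻¹ * ((Υ.mulVec α) (Sum.inr (i, j))) := by
      have h2 : (Υ.mulVec α) (Sum.inr (i, j)) = ∑ r, Υ (Sum.inr (i, j)) r * α r := rfl
      rw [h2, Finset.mul_sum]
      refine Finset.sum_congr rfl fun r _ => ?_
      have hvne : v i j ≠ 0 := ne_of_gt (hvpos i j)
      rcases r with l | ⟨l, b⟩
      · show α (Sum.inl l) * pdv (C (x l)) j (x i)
          = (v i j)⁻¹ * (v i j * pd1 C j (x i) (x l) * α (Sum.inl l))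
        rw [pdvC_pd1 hCsmooth hCsymm]
        field_simp
      · show α (Sum.inr (l, b)) * (v l b * pdv (fun z => pd1 C b (x l) z) j (x i))
          = (v i j)⁻¹ * (v i j * v l b * pd12 C j b (x i) (x l) * α (Sum.inr (l, b)))
        rw [pdv_pd1sec_pd12 hCsmooth hCsymm]
        field_simp
    rw [h1, hαkey]
    show (v i j)⁻¹ * signVec a (Sum.inr (i, j)) = 0
    simp [signVec]
  refine ⟨hdetunit, hval, hgrad, ?_, ?_⟩
  · -- conclusion 4 : far-field bound
    intro z hzX hzfar
    rw [hη]
    show |∑ r, α r * kerVec C x v z r| < 1 - εη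
    have hsum : ∑ r, α r * kerVec C x v z r
        = (∑ l, α (Sum.inl l) * C (x l) z)
          + ∑ p : Fin s × Fin d, α (Sum.inr p) * (v p.1 p.2 * pd1 C p.2 (x p.1) z) :=
      Fintype.sum_sum_type _
    set SC := ∑ l, |C (x l) z| with hSCdef
    set SG := ∑ l, Real.sqrt (∑ b, (pd1 C b (x l) z) ^ 2) with hSGdef
    have E1 : |∑ l, α (Sum.inl l) * C (x l) z| ≤ SC * (1 / (1 - δ')) := by
      have h1 := sum_mul_abs_le Finset.univ (fun l => C (x l) z) (fun l => α (Sum.inl l))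
        SC (1 / (1 - δ')) le_rfl (fun l _ => hβb l) (by positivity)
      calc |∑ l, α (Sum.inl l) * C (x l) z| = |∑ l, C (x l) z * α (Sum.inl l)| := by
            congr 1
            exact Finset.sum_congr rfl fun l _ => mul_comm _ _
        _ ≤ SC * (1 / (1 - δ')) := h1
    have E2pre : ∑ p : Fin s × Fin d, |v p.1 p.2 * pd1 C p.2 (x p.1) z|
        ≤ (Real.sqrt vc)⁻¹ * (Real.sqrt d * SG) := by
      rw [Fintype.sum_prod_type]
      calc ∑ l, ∑ b, |v l b * pd1 C b (x l) z|
          ≤ ∑ l, (Real.sqrt vc)⁻¹ * (∑ b, |pd1 C b (x l) z|) := by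
            refine Finset.sum_le_sum fun l _ => ?_
            rw [Finset.mul_sum]
            refine Finset.sum_le_sum fun b _ => ?_
            rw [abs_mul, abs_of_pos (hvpos l b)]
            exact mul_le_mul_of_nonneg_right (hvle l b) (abs_nonneg _)
        _ ≤ ∑ l, (Real.sqrt vc)⁻¹ * (Real.sqrt d * Real.sqrt (∑ b, (pd1 C b (x l) z) ^ 2)) := by
            refine Finset.sum_le_sum fun l _ => ?_
            exact mul_le_mul_of_nonneg_left (sum_abs_le_sqrt _) (by positivity)
        _ = (Real.sqrt vc)⁻¹ * (Real.sqrt d * SG) := by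
            rw [hSGdef]
            calc ∑ l, (Real.sqrt vc)⁻¹ * (Real.sqrt d * Real.sqrt (∑ b, (pd1 C b (x l) z) ^ 2))
                = ∑ l, ((Real.sqrt vc)⁻¹ * Real.sqrt d)
                    * Real.sqrt (∑ b, (pd1 C b (x l) z) ^ 2) := by
                  exact Finset.sum_congr rfl fun l _ => by ring
              _ = ((Real.sqrt vc)⁻¹ * Real.sqrt d)
                    * ∑ l, Real.sqrt (∑ b, (pd1 C b (x l) z) ^ 2) := by
                  rw [Finset.mul_sum]
              _ = (Real.sqrt vc)⁻¹ * (Real.sqrt d * ∑ l, Real.sqrt (∑ b, (pd1 C b (x l) z) ^ 2)) := by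
                  ring
    have E2 : |∑ p : Fin s × Fin d, α (Sum.inr p) * (v p.1 p.2 * pd1 C p.2 (x p.1) z)|
        ≤ ((Real.sqrt vc)⁻¹ * (Real.sqrt d * SG)) * (uc * 1 / ((1 - δ) * (1 - δ'))) := by
      have h1 := sum_mul_abs_le Finset.univ
        (fun p : Fin s × Fin d => v p.1 p.2 * pd1 C p.2 (x p.1) z)
        (fun p => α (Sum.inr p)) ((Real.sqrt vc)⁻¹ * (Real.sqrt d * SG))
        (uc * 1 / ((1 - δ) * (1 - δ'))) E2pre (fun p _ => hγb p) (by positivity)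
      calc |∑ p : Fin s × Fin d, α (Sum.inr p) * (v p.1 p.2 * pd1 C p.2 (x p.1) z)|
          = |∑ p : Fin s × Fin d, (v p.1 p.2 * pd1 C p.2 (x p.1) z) * α (Sum.inr p)| := by
            congr 1
            exact Finset.sum_congr rfl fun p _ => mul_comm _ _
        _ ≤ _ := h1
    have hSGnn : 0 ≤ SG := Finset.sum_nonneg fun l _ => Real.sqrt_nonneg _
    have hSCb : SC < c0 + e0 ∧ SG ≤ c1 + e1 := by
      by_cases hclose : ∃ l₀, nsep (x l₀ - z) < Δ / 2
      · obtain ⟨l₀, hl₀⟩ := hclose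
        have hothers : ∀ l, l ≠ l₀ → Δ / 2 ≤ nsep (x l - z) := by
          intro l hl
          have h1 := hsepx l l₀ hl
          have h2 : nsep (x l - x l₀) ≤ nsep (x l - z) + nsep (z - x l₀) := by
            have h3 := map_add_le_add nsep (x l - z) (z - x l₀)
            have h4 : (x l - z) + (z - x l₀) = x l - x l₀ := by abel
            rwa [h4] at h3
          have h5 : nsep (z - x l₀) = nsep (x l₀ - z) := hnsymm _ _
          linarith
        have hcard : (Finset.univ.erase l₀).card < smax := by
          have h6 : (Finset.univ.erase l₀).card = s - 1 := by
            simp [Finset.card_erase_of_mem]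
          omega
        constructor
        · rw [hSCdef, ← Finset.add_sum_erase _ _ (Finset.mem_univ l₀)]
          have B1v : |C (x l₀) z| ≤ c0 := by
            refine hfar0 (x l₀) (hxX l₀) z hzX ?_
            rw [hnsymm]
            exact hzfar l₀
          have B2v : ∑ l ∈ Finset.univ.erase l₀, |C (x l) z| < e0 := by
            calc ∑ l ∈ Finset.univ.erase l₀, |C (x l) z|
                ≤ (Finset.univ.erase l₀).card • (e0 / smax) :=
                  Finset.sum_le_card_nsmul _ _ _ fun l hl =>
                    hhalf0 (x l) (hxX l) z hzX (hothers l (Finset.ne_of_mem_erase hl))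
              _ = ((Finset.univ.erase l₀).card : ℝ) * (e0 / smax) := nsmul_eq_mul _ _
              _ < (smax : ℝ) * (e0 / smax) := by
                  refine mul_lt_mul_of_pos_right ?_ (by positivity)
                  exact_mod_cast hcard
              _ = e0 := by field_simp
          linarith
        · rw [hSGdef, ← Finset.add_sum_erase _ _ (Finset.mem_univ l₀)]
          have B1v : Real.sqrt (∑ b, (pd1 C b (x l₀) z) ^ 2) ≤ c1 := by
            refine hfar1 (x l₀) (hxX l₀) z hzX ?_
            rw [hnsymm]
            exact hzfar l₀
          have B2v : ∑ l ∈ Finset.univ.erase l₀, Real.sqrt (∑ b, (pd1 C b (x l) z) ^ 2) ≤ e1 :=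
            sum_le_smax_mul _ _ _ (le_of_lt he1) smax hsmax (hcards l₀) fun l hl =>
              hhalf1 (x l) (hxX l) z hzX (hothers l (Finset.ne_of_mem_erase hl))
          linarith
      · push_neg at hclose
        have hcardu : (Finset.univ : Finset (Fin s)).card ≤ smax := by simpa using hss
        constructor
        · have B2v : SC ≤ e0 := by
            rw [hSCdef]
            exact sum_le_smax_mul _ _ _ (le_of_lt he0) smax hsmax hcardu fun l _ =>
              hhalf0 (x l) (hxX l) z hzX (hclose l)
          linarith
        · have B2v : SG ≤ e1 := by
            rw [hSGdef]
            exact sum_le_smax_mul _ _ _ (le_of_lt he1) smax hsmax hcardu fun l _ =>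
              hhalf1 (x l) (hxX l) z hzX (hclose l)
          linarith
    obtain ⟨hSClt, hSGle⟩ := hSCb
    calc |∑ r, α r * kerVec C x v z r|
        ≤ SC * (1 / (1 - δ'))
          + ((Real.sqrt vc)⁻¹ * (Real.sqrt d * SG)) * (uc * 1 / ((1 - δ) * (1 - δ'))) := by
          rw [hsum]
          exact le_trans (abs_add_le _ _) (add_le_add E1 E2)
      _ < (c0 + e0) * (1 / (1 - δ'))
          + ((Real.sqrt vc)⁻¹ * (Real.sqrt d * (c1 + e1))) * (uc * 1 / ((1 - δ) * (1 - δ'))) := by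
          have s1 : SC * (1 / (1 - δ')) < (c0 + e0) * (1 / (1 - δ')) :=
            mul_lt_mul_of_pos_right hSClt (by positivity)
          have s2 : ((Real.sqrt vc)⁻¹ * (Real.sqrt d * SG)) * (uc * 1 / ((1 - δ) * (1 - δ')))
              ≤ ((Real.sqrt vc)⁻¹ * (Real.sqrt d * (c1 + e1)))
                  * (uc * 1 / ((1 - δ) * (1 - δ'))) := by
            refine mul_le_mul_of_nonneg_right ?_ (by positivity)
            exact mul_le_mul_of_nonneg_left
              (mul_le_mul_of_nonneg_left hSGle (Real.sqrt_nonneg d)) (by positivity)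
          linarith
      _ = 1 - εη := by
          rw [hεη, hucdef]
          have hne1 : Real.sqrt vc ≠ 0 := ne_of_gt hsvc
          have hne2 : (1 - δ) ≠ 0 := ne_of_gt h1δ
          have hne3 : (1 - δ') ≠ 0 := ne_of_gt h1δ'
          field_simp
          ring
  · -- conclusion 5 : curvature bound
    intro i z hzX hznear u hu
    have hu2 : (0:ℝ) < ‖u‖ ^ 2 := by
      have h1 : 0 < ‖u‖ := norm_pos_iff.mpr hu
      positivity
    have hnear1 : nsep (x i - z) ≤ εnear := by
      rw [hnsymm]
      exact hznear
    have hfarl : ∀ l, l ≠ i → Δ / 2 ≤ nsep (x l - z) := by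
      intro l hl
      have h1 := hsepx l i hl
      have h2 : nsep (x l - x i) ≤ nsep (x l - z) + nsep (z - x i) := by
        have h3 := map_add_le_add nsep (x l - z) (z - x i)
        have h4 : (x l - z) + (z - x i) = x l - x i := by abel
        rwa [h4] at h3
      linarith only [h1, h2, hznear, hΔ]
    set wv : Fin s → Euc d :=
      fun l => (WithLp.equiv 2 (Fin d → ℝ)).symm (fun b => α (Sum.inr (l, b)) * v l b) with hwdef
    have hwapp : ∀ l b, wv l b = α (Sum.inr (l, b)) * v l b := fun l b => rfl
    set W : ℝ := Real.sqrt d * ((uc * 1 / ((1 - δ) * (1 - δ'))) * (Real.sqrt vc)⁻¹) with hWdef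
    have hWnn : 0 ≤ W := by positivity
    have hwnorm : ∀ l, ‖wv l‖ ≤ W := by
      intro l
      rw [hWdef]
      refine euc_norm_le (wv l) _ (by positivity) ?_
      intro b
      rw [hwapp, abs_mul, abs_of_pos (hvpos l b)]
      exact mul_le_mul (hγb (l, b)) (hvle l b) (le_of_lt (hvpos l b)) (by positivity)
    have hhessmat : hess η z = (∑ l, α (Sum.inl l) • hess2 C (x l) z)
        + ∑ l, (∑ b, (wv l) b • pd1hess2 C b (x l) z) := by
      funext i' j'
      rw [hη, eta_hess hCsmooth, Fintype.sum_sum_type]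
      have hrhs : ((∑ l, α (Sum.inl l) • hess2 C (x l) z)
          + ∑ l, (∑ b, (wv l) b • pd1hess2 C b (x l) z)) i' j'
          = (∑ l, α (Sum.inl l) * hess2 C (x l) z i' j')
            + ∑ l, (∑ b, wv l b * pd1hess2 C b (x l) z i' j') := by
        simp [Matrix.add_apply, Matrix.sum_apply, Matrix.smul_apply, smul_eq_mul]
      rw [hrhs]
      have hinr : ∑ p : Fin s × Fin d,
          α (Sum.inr p) * (Sum.elim (fun l => hess2 C (x l) z i' j')
            (fun p => v p.1 p.2 * pd1hess2 C p.2 (x p.1) z i' j') (Sum.inr p))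
          = ∑ l, (∑ b, wv l b * pd1hess2 C b (x l) z i' j') := by
        rw [Fintype.sum_prod_type]
        refine Finset.sum_congr rfl fun l _ => Finset.sum_congr rfl fun b _ => ?_
        show α (Sum.inr (l, b)) * (v l b * pd1hess2 C b (x l) z i' j')
          = wv l b * pd1hess2 C b (x l) z i' j'
        rw [hwapp]
        ring
      rw [hinr]
      rfl
    set q : Matrix (Fin d) (Fin d) ℝ → ℝ
      := fun A => dotProduct (⇑u) (A.mulVec ⇑u) with hqdef
    have hqabs : ∀ A, |q A| ≤ specNorm A * ‖u‖ ^ 2 := fun A => qform_abs_le A u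
    have hq : dotProduct (⇑u) ((hess η z).mulVec ⇑u)
        = (∑ l, α (Sum.inl l) * q (hess2 C (x l) z))
          + ∑ l, q (∑ b, (wv l) b • pd1hess2 C b (x l) z) := by
      rw [hhessmat]
      rw [Matrix.add_mulVec, dotProduct_add]
      congr 1
      · rw [qform_sum]
        exact Finset.sum_congr rfl fun l _ => qform_smul _ _ _
      · rw [qform_sum]
    -- individual bounds
    have hQi : q (hess2 C (x i) z) ≤ (-lam1) * ‖u‖ ^ 2 :=
      (hnear2 (x i) (hxX i) z hzX hnear1 u).2
    have hQl : ∀ l, l ≠ i → |q (hess2 C (x l) z)| ≤ (e2 / smax) * ‖u‖ ^ 2 := by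
      intro l hl
      calc |q (hess2 C (x l) z)| ≤ specNorm (hess2 C (x l) z) * ‖u‖ ^ 2 := hqabs _
        _ ≤ (e2 / smax) * ‖u‖ ^ 2 :=
          mul_le_mul_of_nonneg_right
            (hhalf2 (x l) (hxX l) z hzX (hfarl l hl)) (by positivity)
    have hK1le : |q (∑ b, (wv i) b • pd1hess2 C b (x i) z)| ≤ b3 * W * ‖u‖ ^ 2 := by
      calc |q (∑ b, (wv i) b • pd1hess2 C b (x i) z)|
          ≤ specNorm (∑ b, (wv i) b • pd1hess2 C b (x i) z) * ‖u‖ ^ 2 := hqabs _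
        _ ≤ (b3 * ‖wv i‖) * ‖u‖ ^ 2 :=
          mul_le_mul_of_nonneg_right
            (hnear3 (x i) (hxX i) z hzX hnear1 (wv i)) (by positivity)
        _ ≤ b3 * W * ‖u‖ ^ 2 := by
          refine mul_le_mul_of_nonneg_right ?_ (by positivity)
          exact mul_le_mul_of_nonneg_left (hwnorm i) (le_of_lt hb3)
    have hKlle : ∀ l, l ≠ i → |q (∑ b, (wv l) b • pd1hess2 C b (x l) z)|
        ≤ (e3 / smax) * W * ‖u‖ ^ 2 := by
      intro l hl
      calc |q (∑ b, (wv l) b • pd1hess2 C b (x l) z)|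
          ≤ specNorm (∑ b, (wv l) b • pd1hess2 C b (x l) z) * ‖u‖ ^ 2 := hqabs _
        _ ≤ ((e3 / smax) * ‖wv l‖) * ‖u‖ ^ 2 :=
          mul_le_mul_of_nonneg_right
            (hhalf3 (x l) (hxX l) z hzX (hfarl l hl) (wv l)) (by positivity)
        _ ≤ (e3 / smax) * W * ‖u‖ ^ 2 := by
          refine mul_le_mul_of_nonneg_right ?_ (by positivity)
          exact mul_le_mul_of_nonneg_left (hwnorm l) (by positivity)
    -- sign manipulations
    have hsgnsq : Real.sign (a i) * Real.sign (a i) = 1 := by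
      have h1 : Real.sign (a i) * Real.sign (a i)
          = |Real.sign (a i)| * |Real.sign (a i)| := (abs_mul_abs_self _).symm
      rw [h1, hsgn i, one_mul]
    have hsabs : ∀ t : ℝ, Real.sign (a i) * t ≤ |t| := by
      intro t
      calc Real.sign (a i) * t ≤ |Real.sign (a i) * t| := le_abs_self _
        _ = |t| := by rw [abs_mul, hsgn i, one_mul]
    have hβi : 1 - δ' * (1 / (1 - δ')) ≤ Real.sign (a i) * α (Sum.inl i) := by
      have h1 : |α (Sum.inl i) - Real.sign (a i)| ≤ δ' * (1 / (1 - δ')) := hβs i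
      have h2 : |Real.sign (a i) * (α (Sum.inl i) - Real.sign (a i))| ≤ δ' * (1 / (1 - δ')) := by
        rw [abs_mul, hsgn i, one_mul]
        exact h1
      have h2' := (abs_le.mp h2).1
      have heq : Real.sign (a i) * α (Sum.inl i)
          = Real.sign (a i) * (α (Sum.inl i) - Real.sign (a i))
            + Real.sign (a i) * Real.sign (a i) := by ring
      rw [hsgnsq] at heq
      linarith only [heq, h2']
    have hc1' : 0 < 1 - δ' * (1 / (1 - δ')) := by
      rw [hlamEta] at hlamEtapos
      have h1 : 0 ≤ uc * Real.sqrt d * (b3 + e3)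
          / (Real.sqrt vc * (1 - δ) * (1 - δ')) := by positivity
      have h2 : 0 < e2 / (1 - δ') := by positivity
      have h3 : 0 < (1 - δ' / (1 - δ')) * lam1 := by
        linarith only [hlamEtapos, h1, h2]
      have h4 : 0 < 1 - δ' / (1 - δ') := by
        by_contra hcon
        push_neg at hcon
        have h6 : (1 - δ' / (1 - δ')) * lam1 ≤ 0 * lam1 :=
          mul_le_mul_of_nonneg_right hcon (le_of_lt hlam1)
        rw [zero_mul] at h6
        linarith only [h3, h6]
      have h5 : δ' * (1 / (1 - δ')) = δ' / (1 - δ') := by ring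
      linarith only [h4, h5]
    have hmain : (1 - δ' * (1 / (1 - δ'))) * (lam1 * ‖u‖ ^ 2)
        ≤ (Real.sign (a i) * α (Sum.inl i)) * (-(q (hess2 C (x i) z))) := by
      have h1 : lam1 * ‖u‖ ^ 2 ≤ -(q (hess2 C (x i) z)) := by linarith only [hQi]
      exact mul_le_mul hβi h1 (by positivity) (le_trans (le_of_lt hc1') hβi)
    -- cardinality bound
    have hcardR : ((Finset.univ.erase i).card : ℝ) < (smax : ℝ) := by
      have h6 : (Finset.univ.erase i).card = s - 1 := by
        simp [Finset.card_erase_of_mem]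
      have h7 : (Finset.univ.erase i).card < smax := by omega
      exact_mod_cast h7
    -- assemble
    rw [hq,
      ← Finset.add_sum_erase _ (fun l => α (Sum.inl l) * q (hess2 C (x l) z))
        (Finset.mem_univ i),
      ← Finset.add_sum_erase _ (fun l => q (∑ b, (wv l) b • pd1hess2 C b (x l) z))
        (Finset.mem_univ i)]
    set S2 := ∑ l ∈ Finset.univ.erase i, α (Sum.inl l) * q (hess2 C (x l) z) with hS2
    set S3 := ∑ l ∈ Finset.univ.erase i, q (∑ b, (wv l) b • pd1hess2 C b (x l) z) with hS3
    have hS2lt : |S2| < e2 / (1 - δ') * ‖u‖ ^ 2 := by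
      have hb : ∀ l ∈ Finset.univ.erase i, |α (Sum.inl l) * q (hess2 C (x l) z)|
          ≤ 1 / (1 - δ') * ((e2 / smax) * ‖u‖ ^ 2) := by
        intro l hl
        rw [abs_mul]
        exact mul_le_mul (hβb l) (hQl l (Finset.ne_of_mem_erase hl)) (abs_nonneg _)
          (by positivity)
      have hbpos : 0 < 1 / (1 - δ') * ((e2 / smax) * ‖u‖ ^ 2) := by
        apply mul_pos (by positivity)
        exact mul_pos (by positivity) hu2
      calc |S2| ≤ ∑ l ∈ Finset.univ.erase i, |α (Sum.inl l) * q (hess2 C (x l) z)| := by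
            rw [hS2]
            exact Finset.abs_sum_le_sum_abs _ _
        _ ≤ (Finset.univ.erase i).card • (1 / (1 - δ') * ((e2 / smax) * ‖u‖ ^ 2)) :=
            Finset.sum_le_card_nsmul _ _ _ hb
        _ = ((Finset.univ.erase i).card : ℝ) * (1 / (1 - δ') * ((e2 / smax) * ‖u‖ ^ 2)) :=
            nsmul_eq_mul _ _
        _ < (smax : ℝ) * (1 / (1 - δ') * ((e2 / smax) * ‖u‖ ^ 2)) :=
            mul_lt_mul_of_pos_right hcardR hbpos
        _ = e2 / (1 - δ') * ‖u‖ ^ 2 := by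
            have hne3 : (1 - δ') ≠ 0 := ne_of_gt h1δ'
            have hnesm : (smax : ℝ) ≠ 0 := ne_of_gt hsmaxR
            field_simp
    have hS3le : |S3| ≤ e3 * W * ‖u‖ ^ 2 := by
      calc |S3| ≤ ∑ l ∈ Finset.univ.erase i, |q (∑ b, (wv l) b • pd1hess2 C b (x l) z)| := by
            rw [hS3]
            exact Finset.abs_sum_le_sum_abs _ _
        _ ≤ (Finset.univ.erase i).card • ((e3 / smax) * W * ‖u‖ ^ 2) :=
            Finset.sum_le_card_nsmul _ _ _ fun l hl => hKlle l (Finset.ne_of_mem_erase hl)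
        _ = ((Finset.univ.erase i).card : ℝ) * ((e3 / smax) * W * ‖u‖ ^ 2) :=
            nsmul_eq_mul _ _
        _ ≤ (smax : ℝ) * ((e3 / smax) * W * ‖u‖ ^ 2) :=
            mul_le_mul_of_nonneg_right (le_of_lt hcardR) (by positivity)
        _ = e3 * W * ‖u‖ ^ 2 := by
            have hnesm : (smax : ℝ) ≠ 0 := ne_of_gt hsmaxR
            field_simp
    have hWsum : b3 * W + e3 * W
        = uc * Real.sqrt d * (b3 + e3) / (Real.sqrt vc * (1 - δ) * (1 - δ')) := by
      rw [hWdef]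
      have hne1 : Real.sqrt vc ≠ 0 := ne_of_gt hsvc
      have hne2 : (1 - δ) ≠ 0 := ne_of_gt h1δ
      have hne3 : (1 - δ') ≠ 0 := ne_of_gt h1δ'
      field_simp
    have hfinal : lamEta * ‖u‖ ^ 2
        = (1 - δ' * (1 / (1 - δ'))) * (lam1 * ‖u‖ ^ 2) - e2 / (1 - δ') * ‖u‖ ^ 2
          - (b3 * W * ‖u‖ ^ 2 + e3 * W * ‖u‖ ^ 2) := by
      rw [hlamEta, ← hWsum]
      ring
    have hexp : (-Real.sign (a i))
          * ((α (Sum.inl i) * q (hess2 C (x i) z) + S2)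
            + (q (∑ b, (wv i) b • pd1hess2 C b (x i) z) + S3))
        = (Real.sign (a i) * α (Sum.inl i)) * (-(q (hess2 C (x i) z)))
          - Real.sign (a i) * S2
          - Real.sign (a i) * q (∑ b, (wv i) b • pd1hess2 C b (x i) z)
          - Real.sign (a i) * S3 := by
      ring
    rw [hexp]
    have hs2 := hsabs S2
    have hsK := hsabs (q (∑ b, (wv i) b • pd1hess2 C b (x i) z))
    have hs3 := hsabs S3
    linarith only [hmain, hS2lt, hK1le, hS3le, hs2, hsK, hs3, hfinal]
end
end

section
/- Let Υ, Υ̂ be real symmetric s(d+1) × s(d+1) matrices with ‖Id − Υ‖ ≤ 1/2 and ‖Υ − Υ̂‖ ≤ ε for some 0 < ε ≤ 1/4, let u_s = (σ₁,…,σ_s,0,…,0)ᵀ ∈ ℝ^{s(d+1)} with σ_i ∈ {±1}, and let f : X → ℝ^{s(d+1)} be twice continuously differentiable satisfying |qᵀf(x)| ≤ B₀‖q‖₂ for all q and all x ∈ X^far, and ‖∇²(qᵀf(x))‖ ≤ B₂‖q‖₂ for all q and all x ∈ X^near. Then the function E₂(x) = (Υ⁻¹u_s − Υ̂⁻¹u_s)ᵀf(x)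 satisfies |E₂(x)| ≤ 8√s·ε·B₀ for all x ∈ X^far and ‖∇²E₂(x)‖ ≤ 8√s·ε·B₂ for all x ∈ X^near. -/
open Real

noncomputable section

-- auxiliary: norm bound for ring inverse of an element near 1
lemma inv_norm_bound {R : Type*} [NormedRing R] (hone : ‖(1:R)‖ ≤ 1)
    (u : Rˣ) (c : ℝ) (hc : c < 1) (h : ‖1 - (u : R)‖ ≤ c) :
    ‖((u⁻¹ : Rˣ) : R)‖ ≤ (1 - c)⁻¹ := by
  have hc0 : (0:ℝ) < 1 - c := by linarith
  have key : ‖((u⁻¹:Rˣ):R)‖ ≤ ‖((u⁻¹:Rˣ):R)‖ * c + 1 := by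
    have : ((u⁻¹:Rˣ):R) = (u⁻¹:Rˣ) * (1 - (u:R)) + 1 := by
      rw [mul_sub, mul_one, Units.inv_mul, sub_add_cancel]
    calc ‖((u⁻¹:Rˣ):R)‖ = ‖(u⁻¹:Rˣ) * (1 - (u:R)) + 1‖ := by rw [← this]
      _ ≤ ‖(u⁻¹:Rˣ) * (1 - (u:R))‖ + ‖(1:R)‖ := norm_add_le _ _
      _ ≤ ‖((u⁻¹:Rˣ):R)‖ * c + 1 := by
          have h1 := norm_mul_le ((u⁻¹:Rˣ):R) (1 - (u:R))
          have h2 : ‖((u⁻¹:Rˣ):R)‖ * ‖1 - (u:R)‖ ≤ ‖((u⁻¹:Rˣ):R)‖ * c :=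
            mul_le_mul_of_nonneg_left h (norm_nonneg _)
          linarith
  nlinarith [key, hc0, mul_inv_cancel₀ (show (1-c) ≠ 0 by linarith), inv_nonneg.2 hc0.le]

section key
variable {n : Type*} [Fintype n] [DecidableEq n]

def specNormAux {ι : Type*} [Fintype ι] [DecidableEq ι] (A : Matrix ι ι ℝ) : ℝ :=
  ‖LinearMap.toContinuousLinearMap (Matrix.toEuclideanLin A)‖

lemma specNormAux_eq (A : Matrix n n ℝ) :
    specNormAux A = ‖Matrix.toEuclideanCLM (𝕜 := ℝ) A‖ := by
  congr 1

lemma key_bound (Υ Υhat : Matrix n n ℝ) (ε : ℝ) (hε0 : 0 < ε) (hε : ε ≤ 1/4)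
    (hId : specNormAux (1 - Υ) ≤ 1/2) (hclose : specNormAux (Υ - Υhat) ≤ ε)
    (v : n → ℝ) :
    Real.sqrt (∑ l, ((Υ⁻¹.mulVec v - Υhat⁻¹.mulVec v) l)^2)
      ≤ 8 * ε * Real.sqrt (∑ l, (v l)^2) := by
  set φ := Matrix.toEuclideanCLM (𝕜 := ℝ) (n := n) with hφdef
  set T := φ Υ with hT
  set Th := φ Υhat with hTh
  have one_le : ‖(1 : EuclideanSpace ℝ n →L[ℝ] EuclideanSpace ℝ n)‖ ≤ 1 :=
    ContinuousLinearMap.norm_id_le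
  have h1T : ‖1 - T‖ ≤ 1/2 := by
    rw [hT, ← map_one φ, ← map_sub]; rw [← specNormAux_eq]; exact hId
  have hTTh : ‖T - Th‖ ≤ ε := by
    rw [hT, hTh, ← map_sub]; rw [← specNormAux_eq]; exact hclose
  have h1Th : ‖1 - Th‖ ≤ 3/4 := by
    calc ‖1 - Th‖ = ‖(1 - T) + (T - Th)‖ := by rw [sub_add_sub_cancel]
      _ ≤ ‖1 - T‖ + ‖T - Th‖ := norm_add_le _ _
      _ ≤ 3/4 := by linarith
  -- units
  have hUT : IsUnit T := by
    have := isUnit_one_sub_of_norm_lt_one (x := 1 - T) (by linarith)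
    rwa [sub_sub_cancel] at this
  have hUTh : IsUnit Th := by
    have := isUnit_one_sub_of_norm_lt_one (x := 1 - Th) (by linarith)
    rwa [sub_sub_cancel] at this
  have hbT : ‖((hUT.unit⁻¹ : _ˣ) : EuclideanSpace ℝ n →L[ℝ] EuclideanSpace ℝ n)‖ ≤ 2 := by
    refine le_trans (inv_norm_bound one_le hUT.unit (1/2) (by norm_num)
      (by rw [hUT.unit_spec]; exact h1T)) (by norm_num)
  have hbTh : ‖((hUTh.unit⁻¹ : _ˣ) : EuclideanSpace ℝ n →L[ℝ] EuclideanSpace ℝ n)‖ ≤ 4 := by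
    refine le_trans (inv_norm_bound one_le hUTh.unit (3/4) (by norm_num)
      (by rw [hUTh.unit_spec]; exact h1Th)) (by norm_num)
  -- matrix inverses map to ring inverses
  have hUΥ : IsUnit Υ := by
    have : Υ = φ.symm T := by rw [hT]; simp
    rw [this]; exact hUT.map φ.symm
  have hUΥh : IsUnit Υhat := by
    have : Υhat = φ.symm Th := by rw [hTh]; simp
    rw [this]; exact hUTh.map φ.symm
  have hdetΥ : IsUnit Υ.det := (Matrix.isUnit_iff_isUnit_det Υ).1 hUΥ
  have hdetΥh : IsUnit Υhat.det := (Matrix.isUnit_iff_isUnit_det Υhat).1 hUΥh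
  have hinvT : φ Υ⁻¹ = ((hUT.unit⁻¹ : _ˣ) : EuclideanSpace ℝ n →L[ℝ] EuclideanSpace ℝ n) := by
    refine (Units.inv_eq_of_mul_eq_one_right ?_).symm
    rw [hUT.unit_spec, hT, ← map_mul, Matrix.mul_nonsing_inv Υ hdetΥ, map_one]
  have hinvTh : φ Υhat⁻¹ = ((hUTh.unit⁻¹ : _ˣ) : EuclideanSpace ℝ n →L[ℝ] EuclideanSpace ℝ n) := by
    refine (Units.inv_eq_of_mul_eq_one_right ?_).symm
    rw [hUTh.unit_spec, hTh, ← map_mul, Matrix.mul_nonsing_inv Υhat hdetΥh, map_one]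
  set A := ((hUT.unit⁻¹ : _ˣ) : EuclideanSpace ℝ n →L[ℝ] EuclideanSpace ℝ n) with hA
  set B := ((hUTh.unit⁻¹ : _ˣ) : EuclideanSpace ℝ n →L[ℝ] EuclideanSpace ℝ n) with hB
  have hATB : A - B = A * (Th - T) * B := by
    have hAT : A * T = 1 := Units.inv_mul hUT.unit
    have hThB : Th * B = 1 := Units.mul_inv hUTh.unit
    have hexp : A * (Th - T) * B = A * (Th * B) - (A * T) * B := by
      rw [mul_sub, sub_mul, mul_assoc]
    rw [hexp, hAT, hThB, mul_one, one_mul]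
  have hdiff : ‖φ Υ⁻¹ - φ Υhat⁻¹‖ ≤ 8 * ε := by
    rw [hinvT, hinvTh, hATB]
    have hThT : ‖Th - T‖ ≤ ε := by rw [← neg_sub, norm_neg]; exact hTTh
    calc ‖A * (Th - T) * B‖ ≤ ‖A * (Th - T)‖ * ‖B‖ := norm_mul_le _ _
      _ ≤ (‖A‖ * ‖Th - T‖) * ‖B‖ := by
          gcongr; exact norm_mul_le _ _
      _ ≤ (2 * ε) * 4 := by
          have h0A : (0:ℝ) ≤ ‖A‖ := norm_nonneg _
          have h0T : (0:ℝ) ≤ ‖Th - T‖ := norm_nonneg _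
          have h0B : (0:ℝ) ≤ ‖B‖ := norm_nonneg _
          have : ‖A‖ * ‖Th - T‖ ≤ 2 * ε := mul_le_mul hbT hThT h0T (by norm_num)
          exact mul_le_mul this hbTh h0B (by positivity)
      _ = 8 * ε := by ring
  -- apply to the vector
  have hnorm1 : ∀ w : n → ℝ, ‖(WithLp.equiv 2 (n → ℝ)).symm w‖ = Real.sqrt (∑ l, (w l)^2) := by
    intro w
    rw [EuclideanSpace.norm_eq]
    congr 1
    refine Finset.sum_congr rfl fun l _ => ?_
    rw [WithLp.equiv_symm_apply, PiLp.toLp_apply, Real.norm_eq_abs, sq_abs]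
  have happ : (φ Υ⁻¹ - φ Υhat⁻¹) ((WithLp.equiv 2 (n → ℝ)).symm v)
      = (WithLp.equiv 2 (n → ℝ)).symm (Υ⁻¹.mulVec v - Υhat⁻¹.mulVec v) := by
    rw [ContinuousLinearMap.sub_apply, hφdef,
      WithLp.equiv_symm_apply, Matrix.toEuclideanCLM_toLp, Matrix.toEuclideanCLM_toLp,
      ← WithLp.toLp_sub]
  calc Real.sqrt (∑ l, ((Υ⁻¹.mulVec v - Υhat⁻¹.mulVec v) l)^2)
      = ‖(φ Υ⁻¹ - φ Υhat⁻¹) ((WithLp.equiv 2 (n → ℝ)).symm v)‖ := by rw [happ, hnorm1]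
    _ ≤ ‖φ Υ⁻¹ - φ Υhat⁻¹‖ * ‖(WithLp.equiv 2 (n → ℝ)).symm v‖ :=
        ContinuousLinearMap.le_opNorm _ _
    _ ≤ 8 * ε * Real.sqrt (∑ l, (v l)^2) := by
        rw [hnorm1]
        exact mul_le_mul_of_nonneg_right hdiff (Real.sqrt_nonneg _)
end key

/-- deterministic bound on the error term
`E₂(x) = (Υ⁻¹u_s − Υ̂⁻¹u_s)ᵀ f(x)` and its Hessian. -/
theorem stmt17 (d s : ℕ) (X : Set (Euc d))
    (Υ Υhat : Matrix (Idx s d) (Idx s d) ℝ)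
    (hΥsymm : Υ.IsSymm) (hΥhatsymm : Υhat.IsSymm)
    (hId : specNorm (1 - Υ) ≤ 1 / 2)
    (ε : ℝ) (hε0 : 0 < ε) (hε : ε ≤ 1 / 4)
    (hclose : specNorm (Υ - Υhat) ≤ ε)
    -- sign pattern and the padded sign vector `u_s`
    (σ : Fin s → ℝ) (hσ : ∀ i, σ i = 1 ∨ σ i = -1)
    (us : Idx s d → ℝ) (hus : us = Sum.elim σ (fun _ => 0))
    -- near and far regions determined by points `x_i`, a separation norm and `ε_near`
    (nsep : Seminorm ℝ (Euc d)) (hnsep : ∀ z : Euc d, nsep z = 0 → z = 0)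
    (εnear : ℝ) (hεnear : 0 < εnear) (x : Fin s → Euc d)
    (Xnear Xfar : Set (Euc d))
    (hXnear : Xnear = ⋃ i, {z : Euc d | nsep (z - x i) ≤ εnear})
    (hXfar : Xfar = X \ Xnear)
    -- the vector-valued function `f` and the kernel bounds `B₀`, `B₂`
    (f : Euc d → Idx s d → ℝ) (hf : ∀ l, ContDiff ℝ 2 (fun z => f z l))
    (B0 B2 : ℝ) (hB0 : 0 < B0) (hB2 : 0 < B2)
    (hfB0 : ∀ q : Idx s d → ℝ, ∀ z ∈ Xfar,
      |∑ l, q l * f z l| ≤ B0 * Real.sqrt (∑ l, (q l) ^ 2))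
    (hfB2 : ∀ q : Idx s d → ℝ, ∀ z ∈ Xnear,
      specNorm (hess (fun w => ∑ l, q l * f w l) z) ≤ B2 * Real.sqrt (∑ l, (q l) ^ 2)) :
    (∀ z ∈ Xfar,
      |∑ l, (Υ⁻¹.mulVec us - Υhat⁻¹.mulVec us) l * f z l| ≤ 8 * Real.sqrt s * ε * B0) ∧
    (∀ z ∈ Xnear,
      specNorm (hess (fun w => ∑ l, (Υ⁻¹.mulVec us - Υhat⁻¹.mulVec us) l * f w l) z)
        ≤ 8 * Real.sqrt s * ε * B2) := by
  have hspec : ∀ (A : Matrix (Idx s d) (Idx s d) ℝ), specNorm A = specNormAux A := fun _ => rfl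
  have hsum_us : (∑ l, (us l)^2) = (s : ℝ) := by
    rw [hus, Fintype.sum_sum_type]
    have h1 : ∀ i : Fin s, (Sum.elim σ (fun _ : Fin s × Fin d => (0:ℝ)) (Sum.inl i))^2 = 1 := by
      intro i; rcases hσ i with h | h <;> simp [h]
    simp only [h1, Sum.elim_inr, ne_eq, OfNat.ofNat_ne_zero, not_false_eq_true, zero_pow,
      Finset.sum_const, Finset.card_univ, nsmul_eq_mul, mul_one, Finset.sum_const_zero, add_zero]
    simp
  have hkey := key_bound Υ Υhat ε hε0 hε (by rw [← hspec]; exact hId) (by rw [← hspec]; exact hclose) us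
  rw [hsum_us] at hkey
  set q : Idx s d → ℝ := Υ⁻¹.mulVec us - Υhat⁻¹.mulVec us with hq
  have hq_bound : Real.sqrt (∑ l, (q l)^2) ≤ 8 * ε * Real.sqrt s := hkey
  constructor
  · intro z hz
    calc |∑ l, q l * f z l| ≤ B0 * Real.sqrt (∑ l, (q l)^2) := hfB0 q z hz
      _ ≤ B0 * (8 * ε * Real.sqrt s) := mul_le_mul_of_nonneg_left hq_bound hB0.le
      _ = 8 * Real.sqrt s * ε * B0 := by ring
  · intro z hz
    calc specNorm (hess (fun w => ∑ l, q l * f w l) z) ≤ B2 * Real.sqrt (∑ l, (q l)^2) :=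
        hfB2 q z hz
      _ ≤ B2 * (8 * ε * Real.sqrt s) := mul_le_mul_of_nonneg_left hq_bound hB2.le
      _ = 8 * Real.sqrt s * ε * B2 := by ring
end
end

section
/- Let C(x,x′) = exp(−‖x − x′‖₂²/(2σ²)) be the Gaussian kernel on ℝ^d and write t = x − x′. Then: (a) for all x, x′ with ‖t‖₂ ≤ σ/√2, the Hessian in the second variable satisfies ‖∇₂²C(x,x′)‖ ≤ 1.3895/σ², every eigenvalue of ∇₂²C(x,x′) is at most −0.3893/σ², and for every u ∈ ℝ^d, ‖Σ_{i=1}^d u_i ∂_{1,i}∇₂²C(x,x′)‖ ≤ 2.4750·‖u‖₂/σ³; (b) for all x, x′ with ‖t‖₂ ≥ σ/√2, |C(x,x′)| ≤ 0.7789 and ‖∇₁C(x,x′)‖₂ ≤ 0.6066/σ. -/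
open Real

noncomputable section

/-! ### Auxiliary lemmas -/

lemma gaussDeriv (d : ℕ) (σ : ℝ) (y z : Euc d) :
    HasFDerivAt (fun x : Euc d => Real.exp (-‖x - y‖ ^ 2 / (2 * σ ^ 2)))
      ((Real.exp (-‖z - y‖ ^ 2 / (2 * σ ^ 2)) * (-(2 * σ ^ 2)⁻¹ * 2)) • (innerSL ℝ (z - y))) z := by
  have h1 : HasFDerivAt (fun x : Euc d => x - y) (ContinuousLinearMap.id ℝ (Euc d)) z :=
    (hasFDerivAt_id z).sub_const y
  have h4 := (h1.norm_sq.const_mul (-(2 * σ ^ 2)⁻¹)).exp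
  have hfun : (fun x : Euc d => rexp (-(2 * σ ^ 2)⁻¹ * ‖x - y‖ ^ 2)) =
      (fun x : Euc d => Real.exp (-‖x - y‖ ^ 2 / (2 * σ ^ 2))) := by
    funext x; congr 1; ring
  rw [hfun] at h4
  refine h4.congr_fderiv ?_
  apply ContinuousLinearMap.ext
  intro v
  simp [two_smul]
  ring_nf

lemma pdv_mul_gauss {d : ℕ} (σ : ℝ) (c : Euc d) (p : Euc d → ℝ) (p' : Euc d →L[ℝ] ℝ)
    (z : Euc d) (hp : HasFDerivAt p p' z) (i : Fin d) :
    pdv (fun w => p w * Real.exp (-‖w - c‖ ^ 2 / (2 * σ ^ 2))) i z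
      = p z * (Real.exp (-‖z - c‖ ^ 2 / (2 * σ ^ 2)) * (-(2 * σ ^ 2)⁻¹ * 2) * (z - c) i)
        + Real.exp (-‖z - c‖ ^ 2 / (2 * σ ^ 2)) * p' (EuclideanSpace.single i 1) := by
  have hm : HasFDerivAt (fun w => p w * Real.exp (-‖w - c‖ ^ 2 / (2 * σ ^ 2))) _ z :=
    hp.mul (gaussDeriv d σ c z)
  rw [pdv, hm.fderiv]
  simp [EuclideanSpace.inner_single_right, real_inner_comm]

lemma pdv_gauss {d : ℕ} (σ : ℝ) (c : Euc d) (z : Euc d) (i : Fin d) :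
    pdv (fun w : Euc d => Real.exp (-‖w - c‖ ^ 2 / (2 * σ ^ 2))) i z
      = Real.exp (-‖z - c‖ ^ 2 / (2 * σ ^ 2)) * (-(2 * σ ^ 2)⁻¹ * 2) * (z - c) i := by
  rw [pdv, (gaussDeriv d σ c z).fderiv]
  simp [EuclideanSpace.inner_single_right, real_inner_comm]

lemma coordDeriv {d : ℕ} (c : Euc d) (j : Fin d) (z : Euc d) :
    HasFDerivAt (fun w : Euc d => (w - c) j)
      (EuclideanSpace.proj j : Euc d →L[ℝ] ℝ) z :=
  ((EuclideanSpace.proj (𝕜 := ℝ) j).hasFDerivAt (x := z)).sub_const (c j)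

lemma proj_single {d : ℕ} (i j : Fin d) :
    (EuclideanSpace.proj (𝕜 := ℝ) j) (EuclideanSpace.single i 1)
      = if i = j then 1 else 0 := by
  simp [EuclideanSpace.single_apply, eq_comm]

lemma sub_coord {d : ℕ} (x y : Euc d) (i : Fin d) : (y - x) i = -((x - y) i) := by
  show y i - x i = -(x i - y i); ring

lemma F1 {d : ℕ} (σ : ℝ) (x y : Euc d) (i : Fin d) :
    pd1 (fun x y : Euc d => Real.exp (-‖x - y‖ ^ 2 / (2 * σ ^ 2))) i x y
      = (-(2 * σ ^ 2)⁻¹ * 2) * (x - y) i * Real.exp (-‖x - y‖ ^ 2 / (2 * σ ^ 2)) := by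
  rw [pd1, pdv_gauss]; ring

lemma F2 {d : ℕ} (σ : ℝ) (x y : Euc d) (i j : Fin d) :
    hess2 (fun x y : Euc d => Real.exp (-‖x - y‖ ^ 2 / (2 * σ ^ 2))) x y i j
      = ((-(2 * σ ^ 2)⁻¹ * 2) ^ 2 * ((x - y) i * (x - y) j)
          + (-(2 * σ ^ 2)⁻¹ * 2) * (if i = j then 1 else 0))
        * Real.exp (-‖x - y‖ ^ 2 / (2 * σ ^ 2)) := by
  set c : ℝ := -(2 * σ ^ 2)⁻¹ * 2 with hc
  have hCx : (fun w => pdv (fun w : Euc d => Real.exp (-‖x - w‖ ^ 2 / (2 * σ ^ 2))) j w)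
      = fun w : Euc d => (c * (w - x) j) * Real.exp (-‖w - x‖ ^ 2 / (2 * σ ^ 2)) := by
    funext w
    have : (fun w : Euc d => Real.exp (-‖x - w‖ ^ 2 / (2 * σ ^ 2)))
        = fun w : Euc d => Real.exp (-‖w - x‖ ^ 2 / (2 * σ ^ 2)) := by
      funext w'; rw [norm_sub_rev]
    rw [this, pdv_gauss]; ring
  have hp : HasFDerivAt (fun w : Euc d => c * (w - x) j)
      (c • (EuclideanSpace.proj j : Euc d →L[ℝ] ℝ)) y :=
    (coordDeriv x j y).const_mul c
  calc hess2 (fun x y : Euc d => Real.exp (-‖x - y‖ ^ 2 / (2 * σ ^ 2))) x y i j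
      = pdv (fun w : Euc d => (c * (w - x) j) * Real.exp (-‖w - x‖ ^ 2 / (2 * σ ^ 2))) i y := by
        rw [hess2, hess]; rw [hCx]
    _ = _ := by
        rw [pdv_mul_gauss σ x _ _ y hp i]
        simp only [ContinuousLinearMap.smul_apply, proj_single, smul_eq_mul]
        rw [norm_sub_rev, sub_coord x y j, sub_coord x y i, ← hc]
        ring

lemma F3 {d : ℕ} (σ : ℝ) (x y : Euc d) (k i j : Fin d) :
    pd1hess2 (fun x y : Euc d => Real.exp (-‖x - y‖ ^ 2 / (2 * σ ^ 2))) k x y i j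
      = ((-(2 * σ ^ 2)⁻¹ * 2) ^ 3 * ((x - y) i * (x - y) j * (x - y) k)
          + (-(2 * σ ^ 2)⁻¹ * 2) ^ 2 *
            ((if i = j then 1 else 0) * (x - y) k
              + (if k = j then 1 else 0) * (x - y) i
              + (if k = i then 1 else 0) * (x - y) j))
        * Real.exp (-‖x - y‖ ^ 2 / (2 * σ ^ 2)) := by
  set c : ℝ := -(2 * σ ^ 2)⁻¹ * 2 with hc
  have hfun : (fun x' => hess2 (fun x y : Euc d => Real.exp (-‖x - y‖ ^ 2 / (2 * σ ^ 2))) x' y i j)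
      = fun x' : Euc d =>
        (c ^ 2 * ((x' - y) i * (x' - y) j) + c * (if i = j then 1 else 0))
          * Real.exp (-‖x' - y‖ ^ 2 / (2 * σ ^ 2)) := by
    funext x'; rw [F2]
  have hp : HasFDerivAt
      (fun x' : Euc d => c ^ 2 * ((x' - y) i * (x' - y) j) + c * (if i = j then 1 else 0))
      ((c ^ 2 • ((x - y) i • (EuclideanSpace.proj j : Euc d →L[ℝ] ℝ)
          + (x - y) j • (EuclideanSpace.proj i : Euc d →L[ℝ] ℝ)))) x :=
    (((coordDeriv y i x).mul (coordDeriv y j x)).const_mul (c ^ 2)).add_const _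
  calc pd1hess2 (fun x y : Euc d => Real.exp (-‖x - y‖ ^ 2 / (2 * σ ^ 2))) k x y i j
      = pdv (fun x' : Euc d =>
          (c ^ 2 * ((x' - y) i * (x' - y) j) + c * (if i = j then 1 else 0))
            * Real.exp (-‖x' - y‖ ^ 2 / (2 * σ ^ 2))) k x := by
        rw [pd1hess2]; rw [hfun]
    _ = _ := by
        rw [pdv_mul_gauss σ y _ _ x hp k]
        simp only [ContinuousLinearMap.smul_apply, ContinuousLinearMap.add_apply,
          proj_single, smul_eq_mul, ← hc]
        ring

lemma sum_mul_coord_abs_le {d : ℕ} (t v : Euc d) : |∑ j, t j * v j| ≤ ‖t‖ * ‖v‖ := by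
  have := abs_real_inner_le_norm t v
  simpa [PiLp.inner_apply, RCLike.inner_apply, conj_trivial, mul_comm] using this

lemma sum_coord_sq {d : ℕ} (u : Euc d) : ∑ j, u j * u j = ‖u‖ ^ 2 := by
  rw [← real_inner_self_eq_norm_sq]
  simp only [PiLp.inner_apply, RCLike.inner_apply, conj_trivial, mul_comm]

lemma specNorm_le {d : ℕ} (A : Matrix (Fin d) (Fin d) ℝ) (c : ℝ) (hc : 0 ≤ c)
    (h : ∀ v : Euc d, ‖Matrix.toEuclideanLin A v‖ ≤ c * ‖v‖) : specNorm A ≤ c := by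
  apply ContinuousLinearMap.opNorm_le_bound _ hc
  intro v
  simpa using h v

lemma matBound {d : ℕ} (A : Matrix (Fin d) (Fin d) ℝ) (t : Euc d) (a b : ℝ)
    (ha : 0 ≤ a) (hb : 0 ≤ b)
    (hA : ∀ i j, A i j = b * (t i * t j) - a * (if i = j then 1 else 0))
    (v : Euc d) : ‖Matrix.toEuclideanLin A v‖ ≤ (a + b * ‖t‖ ^ 2) * ‖v‖ := by
  have hw : Matrix.toEuclideanLin A v
      = ((b * ∑ j, t j * v j) • t - a • v : Euc d) := by
    ext i
    have hL : (Matrix.toEuclideanLin A v) i = ∑ j, A i j * v j := rfl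
    have hR : (((b * ∑ j, t j * v j) • t - a • v : Euc d)) i
        = (b * ∑ j, t j * v j) * t i - a * v i := rfl
    rw [hL, hR]
    have h1 : ∀ j, A i j * v j
        = b * t i * (t j * v j) - a * (if i = j then v j else 0) := by
      intro j; rw [hA]; split_ifs <;> ring
    rw [Finset.sum_congr rfl fun j _ => h1 j, Finset.sum_sub_distrib,
      ← Finset.mul_sum, ← Finset.mul_sum, Finset.sum_ite_eq]
    simp; ring
  rw [hw]
  have h2 : ‖((b * ∑ j, t j * v j) • t - a • v : Euc d)‖
      ≤ |b * ∑ j, t j * v j| * ‖t‖ + |a| * ‖v‖ := by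
    refine (norm_sub_le _ _).trans ?_
    rw [norm_smul, norm_smul, Real.norm_eq_abs, Real.norm_eq_abs]
  refine h2.trans ?_
  have h3 : |b * ∑ j, t j * v j| ≤ b * (‖t‖ * ‖v‖) := by
    rw [abs_mul, abs_of_nonneg hb]
    exact mul_le_mul_of_nonneg_left (sum_mul_coord_abs_le t v) hb
  have h4 : |b * ∑ j, t j * v j| * ‖t‖ ≤ b * (‖t‖ * ‖v‖) * ‖t‖ :=
    mul_le_mul_of_nonneg_right h3 (norm_nonneg t)
  rw [abs_of_nonneg ha]
  nlinarith [norm_nonneg t, norm_nonneg v]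

lemma matQF {d : ℕ} (A : Matrix (Fin d) (Fin d) ℝ) (t : Euc d) (a b : ℝ)
    (hA : ∀ i j, A i j = b * (t i * t j) - a * (if i = j then 1 else 0))
    (u : Euc d) :
    dotProduct (⇑u) (A.mulVec ⇑u)
      = b * (∑ j, t j * u j) ^ 2 - a * ‖u‖ ^ 2 := by
  have hmv : ∀ i, A.mulVec (⇑u) i = b * t i * (∑ j, t j * u j) - a * u i := by
    intro i
    have hL : A.mulVec (⇑u) i = ∑ j, A i j * u j := rfl
    rw [hL]
    have h1 : ∀ j, A i j * u j
        = b * t i * (t j * u j) - a * (if i = j then u j else 0) := by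
      intro j; rw [hA]; split_ifs <;> ring
    rw [Finset.sum_congr rfl fun j _ => h1 j, Finset.sum_sub_distrib,
      ← Finset.mul_sum, ← Finset.mul_sum, Finset.sum_ite_eq]
    simp
  rw [dotProduct]
  rw [Finset.sum_congr rfl fun i _ => by rw [hmv i]]
  have h2 : ∀ i, u i * (b * t i * (∑ j, t j * u j) - a * u i)
      = (b * (∑ j, t j * u j)) * (t i * u i) - a * (u i * u i) := by
    intro i; ring
  rw [Finset.sum_congr rfl fun i _ => h2 i, Finset.sum_sub_distrib,
    ← Finset.mul_sum, ← Finset.mul_sum, sum_coord_sq]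
  ring

lemma matBound3 {d : ℕ} (N : Matrix (Fin d) (Fin d) ℝ) (t u : Euc d) (b e : ℝ)
    (hb : 0 ≤ b) (he : 0 ≤ e)
    (hN : ∀ i j, N i j = b * ((∑ k, t k * u k) * (if i = j then 1 else 0)
        + t i * u j + t j * u i) - e * (t i * t j * (∑ k, t k * u k)))
    (v : Euc d) :
    ‖Matrix.toEuclideanLin N v‖
      ≤ (3 * b * ‖t‖ * ‖u‖ + e * ‖t‖ ^ 3 * ‖u‖) * ‖v‖ := by
  set Pu := ∑ k, t k * u k with hPu
  set Pv := ∑ k, t k * v k with hPv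
  set Q := ∑ k, u k * v k with hQ
  have hw : Matrix.toEuclideanLin N v
      = ((b * Pu) • v + (b * Q - e * Pu * Pv) • t + (b * Pv) • u : Euc d) := by
    ext i
    have hL : (Matrix.toEuclideanLin N v) i = ∑ j, N i j * v j := rfl
    have hR : (((b * Pu) • v + (b * Q - e * Pu * Pv) • t + (b * Pv) • u : Euc d)) i
        = (b * Pu) * v i + (b * Q - e * Pu * Pv) * t i + (b * Pv) * u i := rfl
    rw [hL, hR]
    have h1 : ∀ j, N i j * v j
        = b * Pu * (if i = j then v j else 0) + (b * t i) * (u j * v j)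
          + (b * u i) * (t j * v j) - (e * t i * Pu) * (t j * v j) := by
      intro j; rw [hN]; split_ifs <;> ring
    rw [Finset.sum_congr rfl fun j _ => h1 j]
    rw [Finset.sum_sub_distrib, Finset.sum_add_distrib, Finset.sum_add_distrib,
      ← Finset.mul_sum, ← Finset.mul_sum, ← Finset.mul_sum, ← Finset.mul_sum,
      Finset.sum_ite_eq]
    simp [hPv, hQ]
    ring
  rw [hw]
  have habs1 : |Pu| ≤ ‖t‖ * ‖u‖ := sum_mul_coord_abs_le t u
  have habs2 : |Pv| ≤ ‖t‖ * ‖v‖ := sum_mul_coord_abs_le t v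
  have habs3 : |Q| ≤ ‖u‖ * ‖v‖ := sum_mul_coord_abs_le u v
  have e1 : ‖((b * Pu) • v : Euc d)‖ = |b * Pu| * ‖v‖ := by
    rw [norm_smul, Real.norm_eq_abs]
  have e2 : ‖((b * Q - e * Pu * Pv) • t : Euc d)‖ = |b * Q - e * Pu * Pv| * ‖t‖ := by
    rw [norm_smul, Real.norm_eq_abs]
  have e3 : ‖((b * Pv) • u : Euc d)‖ = |b * Pv| * ‖u‖ := by
    rw [norm_smul, Real.norm_eq_abs]
  have t1 := norm_add_le ((b * Pu) • v + (b * Q - e * Pu * Pv) • t : Euc d) ((b * Pv) • u : Euc d)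
  have t2 := norm_add_le ((b * Pu) • v : Euc d) ((b * Q - e * Pu * Pv) • t : Euc d)
  rw [e1, e2, e3] at *
  have B1 : |b * Pu| * ‖v‖ ≤ b * (‖t‖ * ‖u‖) * ‖v‖ := by
    have : |b * Pu| ≤ b * (‖t‖ * ‖u‖) := by
      rw [abs_mul, abs_of_nonneg hb]
      exact mul_le_mul_of_nonneg_left habs1 hb
    exact mul_le_mul_of_nonneg_right this (norm_nonneg v)
  have B3 : |b * Pv| * ‖u‖ ≤ b * (‖t‖ * ‖v‖) * ‖u‖ := by
    have : |b * Pv| ≤ b * (‖t‖ * ‖v‖) := by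
      rw [abs_mul, abs_of_nonneg hb]
      exact mul_le_mul_of_nonneg_left habs2 hb
    exact mul_le_mul_of_nonneg_right this (norm_nonneg u)
  have B2 : |b * Q - e * Pu * Pv| * ‖t‖
      ≤ (b * (‖u‖ * ‖v‖) + e * ((‖t‖ * ‖u‖) * (‖t‖ * ‖v‖))) * ‖t‖ := by
    have hs : |b * Q - e * Pu * Pv| ≤ |b * Q| + |e * Pu * Pv| := by
      rw [sub_eq_add_neg]
      exact (abs_add_le _ _).trans (by rw [abs_neg])
    have hq : |b * Q| ≤ b * (‖u‖ * ‖v‖) := by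
      rw [abs_mul, abs_of_nonneg hb]
      exact mul_le_mul_of_nonneg_left habs3 hb
    have hpp : |e * Pu * Pv| ≤ e * ((‖t‖ * ‖u‖) * (‖t‖ * ‖v‖)) := by
      rw [abs_mul, abs_mul, abs_of_nonneg he, mul_assoc]
      refine mul_le_mul_of_nonneg_left ?_ he
      exact mul_le_mul habs1 habs2 (abs_nonneg _) (by positivity)
    exact mul_le_mul_of_nonneg_right (hs.trans (add_le_add hq hpp)) (norm_nonneg t)
  have hring : b * (‖t‖ * ‖u‖) * ‖v‖
      + (b * (‖u‖ * ‖v‖) + e * ((‖t‖ * ‖u‖) * (‖t‖ * ‖v‖))) * ‖t‖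
      + b * (‖t‖ * ‖v‖) * ‖u‖
      = (3 * b * ‖t‖ * ‖u‖ + e * ‖t‖ ^ 3 * ‖u‖) * ‖v‖ := by ring
  linarith

lemma F3sum {d : ℕ} (σ : ℝ) (x y u : Euc d) (i j : Fin d) :
    (∑ k, u k • pd1hess2 (fun x y : Euc d => Real.exp (-‖x - y‖ ^ 2 / (2 * σ ^ 2))) k x y) i j
      = ((-(2 * σ ^ 2)⁻¹ * 2) ^ 2
            * ((∑ k, (x - y) k * u k) * (if i = j then 1 else 0)
              + (x - y) i * u j + (x - y) j * u i)
          + (-(2 * σ ^ 2)⁻¹ * 2) ^ 3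
            * ((x - y) i * (x - y) j * (∑ k, (x - y) k * u k)))
        * Real.exp (-‖x - y‖ ^ 2 / (2 * σ ^ 2)) := by
  set c : ℝ := -(2 * σ ^ 2)⁻¹ * 2 with hc
  set K := Real.exp (-‖x - y‖ ^ 2 / (2 * σ ^ 2)) with hK
  have hsum : (∑ k, u k • pd1hess2 (fun x y : Euc d => Real.exp (-‖x - y‖ ^ 2 / (2 * σ ^ 2))) k x y) i j
      = ∑ k, u k * pd1hess2 (fun x y : Euc d => Real.exp (-‖x - y‖ ^ 2 / (2 * σ ^ 2))) k x y i j := by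
    simp [Matrix.sum_apply]
  rw [hsum]
  have h1 : ∀ k, u k * pd1hess2 (fun x y : Euc d => Real.exp (-‖x - y‖ ^ 2 / (2 * σ ^ 2))) k x y i j
      = (c ^ 3 * ((x - y) i * (x - y) j) * K) * ((x - y) k * u k)
        + (c ^ 2 * (if i = j then 1 else 0) * K) * ((x - y) k * u k)
        + (c ^ 2 * (x - y) i * K) * (if k = j then u k else 0)
        + (c ^ 2 * (x - y) j * K) * (if k = i then u k else 0) := by
    intro k; rw [F3, ← hc, ← hK]
    split_ifs <;> ring
  rw [Finset.sum_congr rfl fun k _ => h1 k]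
  rw [Finset.sum_add_distrib, Finset.sum_add_distrib, Finset.sum_add_distrib,
    ← Finset.mul_sum, ← Finset.mul_sum, ← Finset.mul_sum, ← Finset.mul_sum,
    Finset.sum_ite_eq', Finset.sum_ite_eq']
  simp only [Finset.mem_univ, if_true]
  split_ifs <;> ring

lemma exp_q_ub : Real.exp (1 / 4) ≤ 5000 / 3893 := by
  have h4 : Real.exp (1 / 4) ^ 4 = Real.exp 1 := by
    rw [← Real.exp_nat_mul]; norm_num
  refine le_of_pow_le_pow_left₀ (n := 4) (by norm_num) (by norm_num) ?_
  rw [h4]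
  calc Real.exp 1 ≤ 2.7182818286 := Real.exp_one_lt_d9.le
    _ ≤ (5000 / 3893) ^ 4 := by norm_num

lemma exp_q_lb : (10000 / 7789 : ℝ) ≤ Real.exp (1 / 4) := by
  have h4 : Real.exp (1 / 4) ^ 4 = Real.exp 1 := by
    rw [← Real.exp_nat_mul]; norm_num
  refine le_of_pow_le_pow_left₀ (n := 4) (by norm_num) (Real.exp_pos _).le ?_
  rw [h4]
  calc ((10000 / 7789 : ℝ)) ^ 4 ≤ 2.7182818283 := by norm_num
    _ ≤ Real.exp 1 := Real.exp_one_gt_d9.le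

lemma exp_h_lb : (10000 / 6066 : ℝ) ≤ Real.exp (1 / 2) := by
  have h2 : Real.exp (1 / 2) ^ 2 = Real.exp 1 := by
    rw [← Real.exp_nat_mul]; norm_num
  refine le_of_pow_le_pow_left₀ (n := 2) (by norm_num) (Real.exp_pos _).le ?_
  rw [h2]
  calc ((10000 / 6066 : ℝ)) ^ 2 ≤ 2.7182818283 := by norm_num
    _ ≤ Real.exp 1 := Real.exp_one_gt_d9.le
set_option maxHeartbeats 1000000 in
/-- explicit derivative bounds for the Gaussian kernel
`C(x,x′) = exp(−‖x−x′‖²/(2σ²))` on `ℝ^d`. -/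
theorem stmt19 (d : ℕ) (σ : ℝ) (hσ : 0 < σ)
    (C : Euc d → Euc d → ℝ)
    (hC : ∀ x y : Euc d, C x y = Real.exp (-‖x - y‖ ^ 2 / (2 * σ ^ 2))) :
    -- (a) bounds at small distance ‖x − x′‖₂ ≤ σ/√2
    (∀ x y : Euc d, ‖x - y‖ ≤ σ / Real.sqrt 2 →
      specNorm (hess2 C x y) ≤ 1.3895 / σ ^ 2 ∧
      (∀ u : Euc d,
        dotProduct (⇑u) ((hess2 C x y).mulVec ⇑u) ≤ -(0.3893 / σ ^ 2) * ‖u‖ ^ 2) ∧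
      (∀ u : Euc d,
        specNorm (∑ i, u i • pd1hess2 C i x y) ≤ 2.4750 * ‖u‖ / σ ^ 3)) ∧
    -- (b) bounds at distance ‖x − x′‖₂ ≥ σ/√2
    (∀ x y : Euc d, σ / Real.sqrt 2 ≤ ‖x - y‖ →
      |C x y| ≤ 0.7789 ∧
      Real.sqrt (∑ i, (pd1 C i x y) ^ 2) ≤ 0.6066 / σ) := by
  have hσ2 : (0:ℝ) < σ ^ 2 := by positivity
  have hCfun : C = fun x y : Euc d => Real.exp (-‖x - y‖ ^ 2 / (2 * σ ^ 2)) := by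
    funext x y; exact hC x y
  subst hCfun
  have hcc : (-(2 * σ ^ 2)⁻¹ * 2 : ℝ) = -(σ ^ 2)⁻¹ := by
    field_simp
  constructor
  · -- part (a)
    intro x y ht
    have hT2 : ‖x - y‖ ^ 2 ≤ σ ^ 2 / 2 := by
      have h := pow_le_pow_left₀ (norm_nonneg _) ht 2
      rwa [div_pow, Real.sq_sqrt (by norm_num : (0:ℝ) ≤ 2)] at h
    set K := Real.exp (-‖x - y‖ ^ 2 / (2 * σ ^ 2)) with hKdef
    have hKpos : 0 < K := Real.exp_pos _
    have hK1 : K ≤ 1 := by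
      rw [hKdef]
      apply Real.exp_le_one_iff.mpr
      rw [neg_div]
      exact neg_nonpos.mpr (by positivity)
    have hA : ∀ i j, hess2 (fun x y : Euc d => Real.exp (-‖x - y‖ ^ 2 / (2 * σ ^ 2))) x y i j
        = (((σ ^ 2)⁻¹) ^ 2 * K) * ((x - y) i * (x - y) j)
          - ((σ ^ 2)⁻¹ * K) * (if i = j then 1 else 0) := by
      intro i j; rw [F2 σ x y i j, hcc, ← hKdef]; ring
    have hKe : K * (‖x - y‖ ^ 2 / (2 * σ ^ 2) + 1) ≤ 1 := by
      have h1 := Real.add_one_le_exp (‖x - y‖ ^ 2 / (2 * σ ^ 2))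
      have h2 : K * Real.exp (‖x - y‖ ^ 2 / (2 * σ ^ 2)) = 1 := by
        rw [hKdef, ← Real.exp_add, neg_div, neg_add_cancel, Real.exp_zero]
      nlinarith [hKpos.le]
    refine ⟨?_, ?_, ?_⟩
    · -- spectral norm bound
      apply specNorm_le _ _ (by positivity)
      intro v
      refine (matBound _ (x - y) ((σ ^ 2)⁻¹ * K) (((σ ^ 2)⁻¹) ^ 2 * K)
        (by positivity) (by positivity) hA v).trans ?_
      refine mul_le_mul_of_nonneg_right ?_ (norm_nonneg v)
      have key : K * σ ^ 2 + K * ‖x - y‖ ^ 2 ≤ 1.3895 * σ ^ 2 := by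
        have hKe2 : K * σ ^ 2 + K * (‖x - y‖ ^ 2 / 2) ≤ σ ^ 2 := by
          have := mul_le_mul_of_nonneg_right hKe hσ2.le
          calc K * σ ^ 2 + K * (‖x - y‖ ^ 2 / 2)
              = K * (‖x - y‖ ^ 2 / (2 * σ ^ 2) + 1) * σ ^ 2 := by
                field_simp; ring
            _ ≤ 1 * σ ^ 2 := this
            _ = σ ^ 2 := one_mul _
        nlinarith [mul_le_mul hK1 hT2 (by positivity) (by norm_num : (0:ℝ) ≤ 1)]
      have heq : (σ ^ 2)⁻¹ * K + ((σ ^ 2)⁻¹) ^ 2 * K * ‖x - y‖ ^ 2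
          = (K * σ ^ 2 + K * ‖x - y‖ ^ 2) / (σ ^ 2 * σ ^ 2) := by
        field_simp
      have heq2 : (1.3895 : ℝ) / σ ^ 2 = (1.3895 * σ ^ 2) / (σ ^ 2 * σ ^ 2) := by
        field_simp
      rw [heq, heq2, div_le_div_iff_of_pos_right (by positivity : (0:ℝ) < σ ^ 2 * σ ^ 2)]
      linarith [key]
    · -- quadratic form bound
      intro u
      rw [matQF _ (x - y) ((σ ^ 2)⁻¹ * K) (((σ ^ 2)⁻¹) ^ 2 * K) hA u]
      set P := ∑ j, (x - y) j * u j with hP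
      have hP2 : P ^ 2 ≤ ‖x - y‖ ^ 2 * ‖u‖ ^ 2 := by
        have h1 := sum_mul_coord_abs_le (x - y) u
        nlinarith [abs_nonneg P, sq_abs P, norm_nonneg (x - y), norm_nonneg u]
      have hKlb : (3893 / 5000 : ℝ) ≤ K := by
        have h1 : Real.exp (-(1/4) : ℝ) ≤ K := by
          rw [hKdef]
          apply Real.exp_le_exp.mpr
          rw [neg_div, neg_le_neg_iff, div_le_iff₀ (by positivity)]
          nlinarith
        refine le_trans ?_ h1
        rw [Real.exp_neg]
        calc (3893 / 5000 : ℝ) = (5000 / 3893 : ℝ)⁻¹ := by norm_num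
          _ ≤ (Real.exp (1/4))⁻¹ :=
            inv_anti₀ (Real.exp_pos _) exp_q_ub
      have key2 : K * P ^ 2 + 0.3893 * (σ ^ 2 * ‖u‖ ^ 2) ≤ K * (σ ^ 2 * ‖u‖ ^ 2) := by
        have h1 : K * P ^ 2 ≤ K * (‖x - y‖ ^ 2 * ‖u‖ ^ 2) :=
          mul_le_mul_of_nonneg_left hP2 hKpos.le
        have h2 : K * (‖x - y‖ ^ 2 * ‖u‖ ^ 2) ≤ K * (σ ^ 2 / 2 * ‖u‖ ^ 2) := by
          apply mul_le_mul_of_nonneg_left _ hKpos.le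
          exact mul_le_mul_of_nonneg_right hT2 (sq_nonneg _)
        nlinarith [mul_le_mul_of_nonneg_right hKlb
          (by positivity : (0:ℝ) ≤ σ ^ 2 * ‖u‖ ^ 2)]
      have heq : ((σ ^ 2)⁻¹) ^ 2 * K * P ^ 2 - (σ ^ 2)⁻¹ * K * ‖u‖ ^ 2
          = (K * P ^ 2 - K * (σ ^ 2 * ‖u‖ ^ 2)) / (σ ^ 2 * σ ^ 2) := by
        field_simp
      have heq2 : -(0.3893 / σ ^ 2) * ‖u‖ ^ 2
          = (-(0.3893 * (σ ^ 2 * ‖u‖ ^ 2))) / (σ ^ 2 * σ ^ 2) := by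
        field_simp
      rw [heq, heq2, div_le_div_iff_of_pos_right (by positivity : (0:ℝ) < σ ^ 2 * σ ^ 2)]
      linarith [key2]
    · -- third derivative bound
      intro u
      apply specNorm_le _ _ (div_nonneg (by positivity) (pow_pos hσ 3).le)
      intro v
      have hN : ∀ i j, (∑ k, u k • pd1hess2
            (fun x y : Euc d => Real.exp (-‖x - y‖ ^ 2 / (2 * σ ^ 2))) k x y) i j
          = (((σ ^ 2)⁻¹) ^ 2 * K) * ((∑ k, (x - y) k * u k) * (if i = j then 1 else 0)
              + (x - y) i * u j + (x - y) j * u i)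
            - (((σ ^ 2)⁻¹) ^ 3 * K) * ((x - y) i * (x - y) j * (∑ k, (x - y) k * u k)) := by
        intro i j; rw [F3sum σ x y u i j, hcc, ← hKdef]; ring
      refine (matBound3 _ (x - y) u (((σ ^ 2)⁻¹) ^ 2 * K) (((σ ^ 2)⁻¹) ^ 3 * K)
        (by positivity) (by positivity) hN v).trans ?_
      refine mul_le_mul_of_nonneg_right ?_ (norm_nonneg v)
      -- 3 b T U + e T³ U ≤ 2.475 U / σ³
      have hs2 : Real.sqrt 2 ^ 2 = 2 := Real.sq_sqrt (by norm_num)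
      have hs2pos : (0:ℝ) < Real.sqrt 2 := Real.sqrt_pos.mpr (by norm_num)
      have hTs : ‖x - y‖ * Real.sqrt 2 ≤ σ := by
        rw [← le_div_iff₀ hs2pos] at *
        exact ht
      have hT3 : ‖x - y‖ ^ 3 * (Real.sqrt 2 * 2) ≤ σ ^ 3 := by
        have h1 : (‖x - y‖ * Real.sqrt 2) ^ 3 ≤ σ ^ 3 :=
          pow_le_pow_left₀ (by positivity) hTs 3
        calc ‖x - y‖ ^ 3 * (Real.sqrt 2 * 2) = (‖x - y‖ * Real.sqrt 2) ^ 3 := by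
              rw [mul_pow]; rw [pow_succ (Real.sqrt 2) 2, hs2]; ring
          _ ≤ σ ^ 3 := h1
      have key3 : 3 * (((σ ^ 2)⁻¹) ^ 2 * K) * ‖x - y‖ * ‖u‖
          + ((σ ^ 2)⁻¹) ^ 3 * K * ‖x - y‖ ^ 3 * ‖u‖ ≤ 2.4750 * ‖u‖ / σ ^ 3 := by
        have heq : 3 * (((σ ^ 2)⁻¹) ^ 2 * K) * ‖x - y‖ * ‖u‖
            + ((σ ^ 2)⁻¹) ^ 3 * K * ‖x - y‖ ^ 3 * ‖u‖
            = ((3 * K * ‖x - y‖ * σ ^ 2 + K * ‖x - y‖ ^ 3) * ‖u‖) / (σ ^ 2) ^ 3 := by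
          field_simp
        rw [heq, div_le_div_iff₀ (by positivity) (pow_pos hσ 3)]
        -- (3 K T σ² + K T³) U σ³ ≤ 2.475 U σ⁶
        have hU : (0:ℝ) ≤ ‖u‖ := norm_nonneg u
        have hT : (0:ℝ) ≤ ‖x - y‖ := norm_nonneg _
        have core : 3 * K * ‖x - y‖ * σ ^ 2 + K * ‖x - y‖ ^ 3 ≤ 2.4750 * σ ^ 3 := by
          have c1 : 3 * K * ‖x - y‖ * σ ^ 2 ≤ 3 * ‖x - y‖ * σ ^ 2 := by
            nlinarith [mul_le_mul_of_nonneg_right hK1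
              (by positivity : (0:ℝ) ≤ 3 * ‖x - y‖ * σ ^ 2)]
          have c2 : K * ‖x - y‖ ^ 3 ≤ ‖x - y‖ ^ 3 := by
            nlinarith [mul_le_mul_of_nonneg_right hK1
              (by positivity : (0:ℝ) ≤ ‖x - y‖ ^ 3)]
          have h3 : (3.5 : ℝ) ≤ 2.4750 * Real.sqrt 2 := by
            nlinarith [hs2, hs2pos.le]
          have hA1 : 3 * ‖x - y‖ * σ ^ 2 * (2 * Real.sqrt 2) ≤ 6 * σ ^ 3 := by
            nlinarith [mul_le_mul_of_nonneg_right hTs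
              (by positivity : (0:ℝ) ≤ 6 * σ ^ 2)]
          have hA2 : ‖x - y‖ ^ 3 * (2 * Real.sqrt 2) ≤ σ ^ 3 := by
            nlinarith [hT3]
          have hA3 : 7 * σ ^ 3 ≤ 2.4750 * σ ^ 3 * (2 * Real.sqrt 2) := by
            nlinarith [h3, pow_pos hσ 3]
          have c3 : 3 * ‖x - y‖ * σ ^ 2 + ‖x - y‖ ^ 3 ≤ 2.4750 * σ ^ 3 := by
            refine le_of_mul_le_mul_right ?_ (by positivity : (0:ℝ) < 2 * Real.sqrt 2)
            calc (3 * ‖x - y‖ * σ ^ 2 + ‖x - y‖ ^ 3) * (2 * Real.sqrt 2)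
                = 3 * ‖x - y‖ * σ ^ 2 * (2 * Real.sqrt 2)
                  + ‖x - y‖ ^ 3 * (2 * Real.sqrt 2) := by ring
              _ ≤ 6 * σ ^ 3 + σ ^ 3 := add_le_add hA1 hA2
              _ = 7 * σ ^ 3 := by ring
              _ ≤ 2.4750 * σ ^ 3 * (2 * Real.sqrt 2) := hA3
          linarith
        calc (3 * K * ‖x - y‖ * σ ^ 2 + K * ‖x - y‖ ^ 3) * ‖u‖ * σ ^ 3
            ≤ 2.4750 * σ ^ 3 * ‖u‖ * σ ^ 3 := by
              refine mul_le_mul_of_nonneg_right (mul_le_mul_of_nonneg_right core hU) ?_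
              positivity
          _ = 2.4750 * ‖u‖ * (σ ^ 2) ^ 3 := by ring
      exact key3
  · -- part (b)
    intro x y ht
    have hT2 : σ ^ 2 / 2 ≤ ‖x - y‖ ^ 2 := by
      have h := pow_le_pow_left₀ (by positivity) ht 2
      rwa [div_pow, Real.sq_sqrt (by norm_num : (0:ℝ) ≤ 2)] at h
    set K := Real.exp (-‖x - y‖ ^ 2 / (2 * σ ^ 2)) with hKdef
    have hKpos : 0 < K := Real.exp_pos _
    constructor
    · -- |C| bound
      rw [abs_of_pos hKpos]
      have h1 : K ≤ Real.exp (-(1/4) : ℝ) := by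
        rw [hKdef]
        apply Real.exp_le_exp.mpr
        rw [neg_div, neg_le_neg_iff, le_div_iff₀ (by positivity)]
        nlinarith
      refine h1.trans ?_
      rw [Real.exp_neg]
      calc (Real.exp (1/4))⁻¹ ≤ (10000 / 7789 : ℝ)⁻¹ :=
            inv_anti₀ (by norm_num) exp_q_lb
        _ ≤ 0.7789 := by norm_num
    · -- gradient bound
      have hs : ∑ i, (pd1 (fun x y : Euc d =>
            Real.exp (-‖x - y‖ ^ 2 / (2 * σ ^ 2))) i x y) ^ 2
          = ((σ ^ 2)⁻¹ * K * ‖x - y‖) ^ 2 := by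
        have h1 : ∀ i, (pd1 (fun x y : Euc d =>
              Real.exp (-‖x - y‖ ^ 2 / (2 * σ ^ 2))) i x y) ^ 2
            = ((σ ^ 2)⁻¹ * K) ^ 2 * ((x - y) i * (x - y) i) := by
          intro i; rw [F1, hcc, ← hKdef]; ring
        rw [Finset.sum_congr rfl fun i _ => h1 i, ← Finset.mul_sum, sum_coord_sq]
        ring
      rw [hs, Real.sqrt_sq (by positivity)]
      -- (σ²)⁻¹ K ‖t‖ ≤ 0.6066/σ
      have h4 : ‖x - y‖ / σ ≤ (‖x - y‖ ^ 2 / σ ^ 2 - 1) / 2 + 1 := by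
        have hd : (‖x - y‖ / σ) ^ 2 = ‖x - y‖ ^ 2 / σ ^ 2 := by rw [div_pow]
        nlinarith [sq_nonneg (‖x - y‖ / σ - 1)]
      have h5 : ‖x - y‖ ≤ σ * Real.exp ((‖x - y‖ ^ 2 / σ ^ 2 - 1) / 2) := by
        have h6 := Real.add_one_le_exp ((‖x - y‖ ^ 2 / σ ^ 2 - 1) / 2)
        have h7 : ‖x - y‖ / σ ≤ Real.exp ((‖x - y‖ ^ 2 / σ ^ 2 - 1) / 2) :=
          h4.trans h6
        calc ‖x - y‖ = σ * (‖x - y‖ / σ) := by field_simp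
          _ ≤ σ * Real.exp ((‖x - y‖ ^ 2 / σ ^ 2 - 1) / 2) :=
            mul_le_mul_of_nonneg_left h7 hσ.le
      have hKE : K * Real.exp ((‖x - y‖ ^ 2 / σ ^ 2 - 1) / 2)
          = Real.exp (-(1/2) : ℝ) := by
        rw [hKdef, ← Real.exp_add]
        congr 1
        field_simp
        ring
      have hE : Real.exp (-(1/2) : ℝ) ≤ 0.6066 := by
        rw [Real.exp_neg]
        calc (Real.exp (1/2))⁻¹ ≤ (10000 / 6066 : ℝ)⁻¹ :=
              inv_anti₀ (by norm_num) exp_h_lb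
          _ ≤ 0.6066 := by norm_num
      have key3 : K * ‖x - y‖ ≤ 0.6066 * σ := by
        calc K * ‖x - y‖
            ≤ K * (σ * Real.exp ((‖x - y‖ ^ 2 / σ ^ 2 - 1) / 2)) :=
              mul_le_mul_of_nonneg_left h5 hKpos.le
          _ = σ * (K * Real.exp ((‖x - y‖ ^ 2 / σ ^ 2 - 1) / 2)) := by ring
          _ = σ * Real.exp (-(1/2) : ℝ) := by rw [hKE]
          _ ≤ σ * 0.6066 := mul_le_mul_of_nonneg_left hE hσ.le
          _ = 0.6066 * σ := by ring
      have heq : (σ ^ 2)⁻¹ * K * ‖x - y‖ = (K * ‖x - y‖) / σ ^ 2 := by ring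
      have heq2 : (0.6066 : ℝ) / σ = (0.6066 * σ) / σ ^ 2 := by
        field_simp
      rw [heq, heq2, div_le_div_iff_of_pos_right hσ2]
      exact key3
end
end
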